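/- If X and Y are exceptional representations of the quiver Q1 with ext1(X,Y) ≠ 0 and ext1(Y,X) ≠ 0, then either X ≅ M and Y ≅ M', or X ≅ M' and Y ≅ M. In other words, {M, M'} is the unique Ext-nontrivial couple of exceptional representations of Q1. -/

import Mathlib

noncomputable section

open Module

universe u

/-- A representation of the quiver `Q1` (vertices 1, 2, 3; arrows 1→3, 1→2, 2→3)
over the field `k`, with finite-dimensional vector spaces at the vertices. -/
structure RepQ1 (k : Type u) [Field k] where
  V1 : Type u
  V2 : Type u
  V3 : Type u
  [acg1 : AddCommGroup V1]
  [acg2 : AddCommGroup V2]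
  [acg3 : AddCommGroup V3]
  [mod1 : Module k V1]
  [mod2 : Module k V2]
  [mod3 : Module k V3]
  [fd1 : FiniteDimensional k V1]
  [fd2 : FiniteDimensional k V2]
  [fd3 : FiniteDimensional k V3]
  r13 : V1 →ₗ[k] V3
  r12 : V1 →ₗ[k] V2
  r23 : V2 →ₗ[k] V3

attribute [instance] RepQ1.acg1 RepQ1.acg2 RepQ1.acg3 RepQ1.mod1 RepQ1.mod2 RepQ1.mod3
  RepQ1.fd1 RepQ1.fd2 RepQ1.fd3

namespace RepQ1

variable {k : Type u} [Field k]

/-- The space of morphisms of representations `ρ → ρ'`: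
triples `(f₁, f₂, f₃)` of linear maps commuting with the structure maps. -/
def homSpace (ρ ρ' : RepQ1 k) :
    Submodule k ((ρ.V1 →ₗ[k] ρ'.V1) × (ρ.V2 →ₗ[k] ρ'.V2) × (ρ.V3 →ₗ[k] ρ'.V3)) where
  carrier := { f | f.2.2 ∘ₗ ρ.r13 = ρ'.r13 ∘ₗ f.1 ∧
                   f.2.1 ∘ₗ ρ.r12 = ρ'.r12 ∘ₗ f.1 ∧
                   f.2.2 ∘ₗ ρ.r23 = ρ'.r23 ∘ₗ f.2.1 }
  add_mem' := by
    rintro f g ⟨h1, h2, h3⟩ ⟨h1', h2', h3'⟩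
    refine ⟨?_, ?_, ?_⟩ <;>
      simp only [Prod.fst_add, Prod.snd_add, LinearMap.add_comp, LinearMap.comp_add,
        h1, h2, h3, h1', h2', h3']
  zero_mem' := by
    refine ⟨?_, ?_, ?_⟩ <;> simp
  smul_mem' := by
    rintro c f ⟨h1, h2, h3⟩
    refine ⟨?_, ?_, ?_⟩ <;>
      simp only [Prod.smul_fst, Prod.smul_snd, LinearMap.smul_comp, LinearMap.comp_smul,
        h1, h2, h3]

/-- `hom ρ ρ'` is the `k`-dimension of the space of morphisms of representations `ρ → ρ'`. -/
def hom (ρ ρ' : RepQ1 k) : ℕ := finrank k (homSpace ρ ρ')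

/-- The linear map `Φ` whose cokernel computes `Ext¹(ρ, ρ')`. -/
def phi (ρ ρ' : RepQ1 k) :
    ((ρ.V1 →ₗ[k] ρ'.V1) × (ρ.V2 →ₗ[k] ρ'.V2) × (ρ.V3 →ₗ[k] ρ'.V3)) →ₗ[k]
      ((ρ.V1 →ₗ[k] ρ'.V3) × (ρ.V1 →ₗ[k] ρ'.V2) × (ρ.V2 →ₗ[k] ρ'.V3)) where
  toFun g := (g.2.2 ∘ₗ ρ.r13 - ρ'.r13 ∘ₗ g.1,
              g.2.1 ∘ₗ ρ.r12 - ρ'.r12 ∘ₗ g.1,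
              g.2.2 ∘ₗ ρ.r23 - ρ'.r23 ∘ₗ g.2.1)
  map_add' g h := by
    refine Prod.ext ?_ (Prod.ext ?_ ?_) <;>
      · simp only [Prod.fst_add, Prod.snd_add, LinearMap.add_comp, LinearMap.comp_add]
        abel
  map_smul' c g := by
    refine Prod.ext ?_ (Prod.ext ?_ ?_) <;>
      simp [LinearMap.smul_comp, LinearMap.comp_smul, smul_sub]

/-- `ext1 ρ ρ'` is the `k`-dimension of the cokernel of `Φ`; it equals
`dim Ext¹(ρ, ρ')` in the abelian category of representations of `Q1`. -/
def ext1 (ρ ρ' : RepQ1 k) : ℕ :=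
  finrank k (((ρ.V1 →ₗ[k] ρ'.V3) × (ρ.V1 →ₗ[k] ρ'.V2) × (ρ.V2 →ₗ[k] ρ'.V3)) ⧸
    LinearMap.range (phi ρ ρ'))

/-- A representation is exceptional if `hom ρ ρ = 1` and `ext1 ρ ρ = 0`. -/
def IsExceptional (ρ : RepQ1 k) : Prop := hom ρ ρ = 1 ∧ ext1 ρ ρ = 0

/-- Isomorphism of representations of `Q1`. -/
def Iso (ρ ρ' : RepQ1 k) : Prop :=
  ∃ (e1 : ρ.V1 ≃ₗ[k] ρ'.V1) (e2 : ρ.V2 ≃ₗ[k] ρ'.V2) (e3 : ρ.V3 ≃ₗ[k] ρ'.V3),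
    e3.toLinearMap ∘ₗ ρ.r13 = ρ'.r13 ∘ₗ e1.toLinearMap ∧
    e2.toLinearMap ∘ₗ ρ.r12 = ρ'.r12 ∘ₗ e1.toLinearMap ∧
    e3.toLinearMap ∘ₗ ρ.r23 = ρ'.r23 ∘ₗ e2.toLinearMap

end RepQ1

variable (k : Type u) [Field k]

/-- `π₊^m : k^{m+1} → k^m`, `(a₁,…,a_{m+1}) ↦ (a₁,…,a_m)`. -/
def piPlus (m : ℕ) : (Fin (m + 1) → k) →ₗ[k] (Fin m → k) :=
  LinearMap.funLeft k k Fin.castSucc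

/-- `π₋^m : k^{m+1} → k^m`, `(a₁,…,a_{m+1}) ↦ (a₂,…,a_{m+1})`. -/
def piMinus (m : ℕ) : (Fin (m + 1) → k) →ₗ[k] (Fin m → k) :=
  LinearMap.funLeft k k Fin.succ

/-- `j₊^m : k^m → k^{m+1}`, `(a₁,…,a_m) ↦ (a₁,…,a_m,0)`. -/
def jPlus (m : ℕ) : (Fin m → k) →ₗ[k] (Fin (m + 1) → k) where
  toFun a := Fin.snoc a 0
  map_add' a b := by
    ext i
    induction i using Fin.lastCases <;> simp
  map_smul' c a := by
    ext i
    induction i using Fin.lastCases <;> simp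

/-- `j₋^m : k^m → k^{m+1}`, `(a₁,…,a_m) ↦ (0,a₁,…,a_m)`. -/
def jMinus (m : ℕ) : (Fin m → k) →ₗ[k] (Fin (m + 1) → k) where
  toFun a := Fin.cons 0 a
  map_add' a b := by
    ext i
    induction i using Fin.cases <;> simp
  map_smul' c a := by
    ext i
    induction i using Fin.cases <;> simp

/-- The representation `E₁^m = (k^{m+1}, k^m, k^m)` with `ρ₁₃ = π₊^m`, `ρ₁₂ = π₋^m`, `ρ₂₃ = id`. -/
def E1 (m : ℕ) : RepQ1 k where
  V1 := Fin (m + 1) → k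
  V2 := Fin m → k
  V3 := Fin m → k
  r13 := piPlus k m
  r12 := piMinus k m
  r23 := LinearMap.id

/-- The representation `E₂^m = (k^m, k^{m+1}, k^{m+1})` with `ρ₁₃ = j₊^m`, `ρ₁₂ = j₋^m`, `ρ₂₃ = id`. -/
def E2 (m : ℕ) : RepQ1 k where
  V1 := Fin m → k
  V2 := Fin (m + 1) → k
  V3 := Fin (m + 1) → k
  r13 := jPlus k m
  r12 := jMinus k m
  r23 := LinearMap.id

/-- The representation `E₃^m = (k^m, k^m, k^{m+1})` with `ρ₁₃ = j₊^m`, `ρ₁₂ = id`, `ρ₂₃ = j₋^m`. -/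
def E3 (m : ℕ) : RepQ1 k where
  V1 := Fin m → k
  V2 := Fin m → k
  V3 := Fin (m + 1) → k
  r13 := jPlus k m
  r12 := LinearMap.id
  r23 := jMinus k m

/-- The representation `E₄^m = (k^{m+1}, k^{m+1}, k^m)` with `ρ₁₃ = π₊^m`, `ρ₁₂ = id`, `ρ₂₃ = π₋^m`. -/
def E4 (m : ℕ) : RepQ1 k where
  V1 := Fin (m + 1) → k
  V2 := Fin (m + 1) → k
  V3 := Fin m → k
  r13 := piPlus k m
  r12 := LinearMap.id
  r23 := piMinus k m

/-- The representation `M = (0, k, 0)` with zero structure maps. -/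
def Mrep : RepQ1 k where
  V1 := Fin 0 → k
  V2 := Fin 1 → k
  V3 := Fin 0 → k
  r13 := 0
  r12 := 0
  r23 := 0

/-- The representation `M' = (k, 0, k)` with `ρ₁₃ = id` and the other structure maps zero. -/
def Mprep : RepQ1 k where
  V1 := Fin 1 → k
  V2 := Fin 0 → k
  V3 := Fin 1 → k
  r13 := LinearMap.id
  r12 := 0
  r23 := 0

namespace RepQ1

variable {k : Type u} [Field k]

/-- An exceptional pair `(X, Y)`: both `X` and `Y` are exceptional and
`hom (Y, X) = 0` and `ext1 (Y, X) = 0`. -/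
def IsExceptionalPair (X Y : RepQ1 k) : Prop :=
  X.IsExceptional ∧ Y.IsExceptional ∧ hom Y X = 0 ∧ ext1 Y X = 0

/-- An exceptional triple `(A, B, C)`: `(A,B)`, `(B,C)` and `(A,C)` are exceptional pairs. -/
def IsExceptionalTriple (A B C : RepQ1 k) : Prop :=
  IsExceptionalPair A B ∧ IsExceptionalPair B C ∧ IsExceptionalPair A C

/-- A morphism of representations of `Q1`. -/
structure Homo (ρ ρ' : RepQ1 k) where
  f1 : ρ.V1 →ₗ[k] ρ'.V1
  f2 : ρ.V2 →ₗ[k] ρ'.V2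
  f3 : ρ.V3 →ₗ[k] ρ'.V3
  comm13 : f3 ∘ₗ ρ.r13 = ρ'.r13 ∘ₗ f1
  comm12 : f2 ∘ₗ ρ.r12 = ρ'.r12 ∘ₗ f1
  comm23 : f3 ∘ₗ ρ.r23 = ρ'.r23 ∘ₗ f2

/-- `0 → A → C → B → 0` is a short exact sequence of representations of `Q1`:
at each vertex the induced sequence of vector spaces is short exact. -/
def IsSES {A C B : RepQ1 k} (f : Homo A C) (g : Homo C B) : Prop :=
  Function.Injective f.f1 ∧ Function.Injective f.f2 ∧ Function.Injective f.f3 ∧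
  Function.Surjective g.f1 ∧ Function.Surjective g.f2 ∧ Function.Surjective g.f3 ∧
  LinearMap.range f.f1 = LinearMap.ker g.f1 ∧
  LinearMap.range f.f2 = LinearMap.ker g.f2 ∧
  LinearMap.range f.f3 = LinearMap.ker g.f3

/-- A representation is zero when all its vector spaces are zero. -/
def IsZeroRep (ρ : RepQ1 k) : Prop :=
  Subsingleton ρ.V1 ∧ Subsingleton ρ.V2 ∧ Subsingleton ρ.V3

end RepQ1

/-- The (vertexwise) direct sum of two representations of `Q1`. -/
def RepQ1.dsum {k : Type u} [Field k] (ρ σ : RepQ1 k) : RepQ1 k where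
  V1 := ρ.V1 × σ.V1
  V2 := ρ.V2 × σ.V2
  V3 := ρ.V3 × σ.V3
  r13 := ρ.r13.prodMap σ.r13
  r12 := ρ.r12.prodMap σ.r12
  r23 := ρ.r23.prodMap σ.r23


/-! ### Auxiliary general linear algebra -/

section QAux

variable {k : Type u} [Field k]

namespace QAux

variable {V W : Type u} [AddCommGroup V] [Module k V] [AddCommGroup W] [Module k W]

lemma map_from_subsingleton [Subsingleton V] (f : V →ₗ[k] W) : f = 0 := by
  ext x
  rw [Subsingleton.elim x 0]
  simp

lemma map_to_subsingleton [Subsingleton W] (f : V →ₗ[k] W) : f = 0 :=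
  LinearMap.ext fun _ => Subsingleton.elim _ _

lemma exists_dual_ne_zero [FiniteDimensional k V] [Nontrivial V] :
    ∃ ψ : Module.Dual k V, ψ ≠ 0 := by
  obtain ⟨v, hv⟩ := exists_ne (0 : V)
  by_contra h
  push_neg at h
  exact hv ((Module.forall_dual_apply_eq_zero_iff k v).mp fun φ => by rw [h φ]; rfl)

lemma exists_dual_annihilator [FiniteDimensional k V] {S : Submodule k V} (hS : S ≠ ⊤) :
    ∃ ψ : Module.Dual k V, ψ ≠ 0 ∧ ∀ x ∈ S, ψ x = 0 := by
  have : Nontrivial (V ⧸ S) := Submodule.Quotient.nontrivial_iff.mpr hS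
  obtain ⟨ξ, hξ⟩ := exists_dual_ne_zero (V := V ⧸ S) (k := k)
  refine ⟨ξ ∘ₗ S.mkQ, ?_, ?_⟩
  · intro h
    apply hξ
    ext q
    exact LinearMap.congr_fun h q
  · intro x hx
    simp [Submodule.Quotient.mk_eq_zero, hx, (Submodule.Quotient.mk_eq_zero S).mpr hx]

lemma trace_smulRight [FiniteDimensional k V] (ψ : Module.Dual k V) (u : V) :
    LinearMap.trace k V (ψ.smulRight u) = ψ u := by
  have h : ψ.smulRight u = dualTensorHom k V V (ψ ⊗ₜ[k] u) := by ext v; simp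
  rw [h, LinearMap.trace_eq_contract_apply, contractLeft_apply]

lemma eq_zero_of_trace_pair [FiniteDimensional k V] [FiniteDimensional k W] (C : W →ₗ[k] V)
    (h : ∀ θ : V →ₗ[k] W, LinearMap.trace k V (C ∘ₗ θ) = 0) : C = 0 := by
  ext w
  rw [LinearMap.zero_apply, ← Module.forall_dual_apply_eq_zero_iff k (C w)]
  intro ψ
  have h2 : C ∘ₗ ψ.smulRight w = ψ.smulRight (C w) := by ext v; simp
  have := h (ψ.smulRight w)
  rwa [h2, trace_smulRight] at this

/-- The trace pairing `(W →ₗ V) →ₗ Dual (V →ₗ W)`. -/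
def pairMap (V W : Type u) [AddCommGroup V] [Module k V] [AddCommGroup W] [Module k W] :
    (W →ₗ[k] V) →ₗ[k] Module.Dual k (V →ₗ[k] W) :=
  (LinearMap.llcomp k V W V).compr₂ (LinearMap.trace k V)

@[simp] lemma pairMap_apply (C : W →ₗ[k] V) (θ : V →ₗ[k] W) :
    pairMap V W C θ = LinearMap.trace k V (C ∘ₗ θ) := rfl

lemma pairMap_injective [FiniteDimensional k V] [FiniteDimensional k W] :
    Function.Injective (pairMap (k := k) V W) := by
  rw [injective_iff_map_eq_zero]
  intro C hC
  exact eq_zero_of_trace_pair C fun θ => by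
    have := LinearMap.congr_fun hC θ; simpa using this

lemma pairMap_bijective [FiniteDimensional k V] [FiniteDimensional k W] :
    Function.Bijective (pairMap (k := k) V W) := by
  refine ⟨pairMap_injective, ?_⟩
  have h1 : finrank k (W →ₗ[k] V) = finrank k (Module.Dual k (V →ₗ[k] W)) := by
    rw [Subspace.dual_finrank_eq, Module.finrank_linearMap, Module.finrank_linearMap, mul_comm]
  have h2 : finrank k (LinearMap.range (pairMap (k := k) V W)) = finrank k (W →ₗ[k] V) :=
    LinearMap.finrank_range_of_inj pairMap_injective
  intro y
  have : LinearMap.range (pairMap (k := k) V W) = ⊤ :=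
    Submodule.eq_top_of_finrank_eq (by rw [h2, h1])
  exact (LinearMap.range_eq_top.mp this) y

end QAux

end QAux
namespace RepQ1

variable {k : Type u} [Field k]

open QAux

/-- The extension-dual relations for a backwards triple `(A, B, C)`. -/
def ExtTriple (X Y : RepQ1 k) (A : Y.V3 →ₗ[k] X.V1) (B : Y.V2 →ₗ[k] X.V1)
    (C : Y.V3 →ₗ[k] X.V2) : Prop :=
  X.r13 ∘ₗ A + X.r23 ∘ₗ C = 0 ∧ X.r12 ∘ₗ B = C ∘ₗ Y.r23 ∧ A ∘ₗ Y.r13 + B ∘ₗ Y.r12 = 0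

lemma ext1_eq_zero_iff_surj (X Y : RepQ1 k) :
    ext1 X Y = 0 ↔ LinearMap.range (phi X Y) = ⊤ := by
  rw [ext1, finrank_zero_iff, Submodule.Quotient.subsingleton_iff]

lemma phi_apply (X Y : RepQ1 k) (g : (X.V1 →ₗ[k] Y.V1) × (X.V2 →ₗ[k] Y.V2) × (X.V3 →ₗ[k] Y.V3)) :
    phi X Y g = (g.2.2 ∘ₗ X.r13 - Y.r13 ∘ₗ g.1,
              g.2.1 ∘ₗ X.r12 - Y.r12 ∘ₗ g.1,
              g.2.2 ∘ₗ X.r23 - Y.r23 ∘ₗ g.2.1) := rfl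

lemma homSpace_eq_ker (X Y : RepQ1 k) : homSpace X Y = LinearMap.ker (phi X Y) := by
  ext f
  show (_ ∧ _ ∧ _) ↔ _
  rw [LinearMap.mem_ker, phi_apply, Prod.mk_eq_zero, Prod.mk_eq_zero]
  simp only [sub_eq_zero]

/-- Euler-form identity relating `hom` and `ext1`. -/
lemma euler (X Y : RepQ1 k) :
    hom X Y + (finrank k X.V1 * finrank k Y.V3 + finrank k X.V1 * finrank k Y.V2 +
      finrank k X.V2 * finrank k Y.V3) =
    ext1 X Y + (finrank k X.V1 * finrank k Y.V1 + finrank k X.V2 * finrank k Y.V2 +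
      finrank k X.V3 * finrank k Y.V3) := by
  have hk : hom X Y = finrank k (LinearMap.ker (phi X Y)) := by
    rw [hom, homSpace_eq_ker]
  have hrn := LinearMap.finrank_range_add_finrank_ker (phi X Y)
  have hq := Submodule.finrank_quotient_add_finrank (LinearMap.range (phi X Y))
  have hdom : finrank k ((X.V1 →ₗ[k] Y.V1) × (X.V2 →ₗ[k] Y.V2) × (X.V3 →ₗ[k] Y.V3)) =
      finrank k X.V1 * finrank k Y.V1 + (finrank k X.V2 * finrank k Y.V2 +
        finrank k X.V3 * finrank k Y.V3) := by
    rw [Module.finrank_prod, Module.finrank_prod, Module.finrank_linearMap,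
      Module.finrank_linearMap, Module.finrank_linearMap]
  have hcod : finrank k ((X.V1 →ₗ[k] Y.V3) × (X.V1 →ₗ[k] Y.V2) × (X.V2 →ₗ[k] Y.V3)) =
      finrank k X.V1 * finrank k Y.V3 + (finrank k X.V1 * finrank k Y.V2 +
        finrank k X.V2 * finrank k Y.V3) := by
    rw [Module.finrank_prod, Module.finrank_prod, Module.finrank_linearMap,
      Module.finrank_linearMap, Module.finrank_linearMap]
  rw [hdom] at hrn
  rw [hcod] at hq
  rw [hk]
  have he : ext1 X Y = finrank k (((X.V1 →ₗ[k] Y.V3) × (X.V1 →ₗ[k] Y.V2) × (X.V2 →ₗ[k] Y.V3)) ⧸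
    LinearMap.range (phi X Y)) := rfl
  omega

/-- `ext1 X Y ≠ 0` iff there is a nonzero backwards triple satisfying the
extension-dual relations. -/
theorem ext1_ne_zero_iff (X Y : RepQ1 k) :
    ext1 X Y ≠ 0 ↔ ∃ (A : Y.V3 →ₗ[k] X.V1) (B : Y.V2 →ₗ[k] X.V1) (C : Y.V3 →ₗ[k] X.V2),
      ExtTriple X Y A B C ∧ ¬(A = 0 ∧ B = 0 ∧ C = 0) := by
  constructor
  · intro hne
    have hr : LinearMap.range (phi X Y) ≠ ⊤ := fun h => hne ((ext1_eq_zero_iff_surj X Y).mpr h)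
    obtain ⟨ζ, hζ0, hζ⟩ := QAux.exists_dual_annihilator (k := k) hr
    let ι1 : (X.V1 →ₗ[k] Y.V3) →ₗ[k]
        ((X.V1 →ₗ[k] Y.V3) × (X.V1 →ₗ[k] Y.V2) × (X.V2 →ₗ[k] Y.V3)) := LinearMap.inl k _ _
    let ι2 : (X.V1 →ₗ[k] Y.V2) →ₗ[k]
        ((X.V1 →ₗ[k] Y.V3) × (X.V1 →ₗ[k] Y.V2) × (X.V2 →ₗ[k] Y.V3)) :=
      (LinearMap.inr k _ _) ∘ₗ (LinearMap.inl k _ _)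
    let ι3 : (X.V2 →ₗ[k] Y.V3) →ₗ[k]
        ((X.V1 →ₗ[k] Y.V3) × (X.V1 →ₗ[k] Y.V2) × (X.V2 →ₗ[k] Y.V3)) :=
      (LinearMap.inr k _ _) ∘ₗ (LinearMap.inr k _ _)
    obtain ⟨A, hA⟩ := (QAux.pairMap_bijective (k := k) (V := X.V1) (W := Y.V3)).2 (ζ ∘ₗ ι1)
    obtain ⟨B, hB⟩ := (QAux.pairMap_bijective (k := k) (V := X.V1) (W := Y.V2)).2 (ζ ∘ₗ ι2)
    obtain ⟨C, hC⟩ := (QAux.pairMap_bijective (k := k) (V := X.V2) (W := Y.V3)).2 (ζ ∘ₗ ι3)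
    have hsum : ∀ θ : ((X.V1 →ₗ[k] Y.V3) × (X.V1 →ₗ[k] Y.V2) × (X.V2 →ₗ[k] Y.V3)),
        ζ θ = LinearMap.trace k X.V1 (A ∘ₗ θ.1) + LinearMap.trace k X.V1 (B ∘ₗ θ.2.1) +
          LinearMap.trace k X.V2 (C ∘ₗ θ.2.2) := by
      intro θ
      have hθ : θ = ι1 θ.1 + ι2 θ.2.1 + ι3 θ.2.2 := by
        refine Prod.ext ?_ (Prod.ext ?_ ?_) <;> simp [ι1, ι2, ι3]
      have e1 : LinearMap.trace k X.V1 (A ∘ₗ θ.1) = ζ (ι1 θ.1) := LinearMap.congr_fun hA θ.1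
      have e2 : LinearMap.trace k X.V1 (B ∘ₗ θ.2.1) = ζ (ι2 θ.2.1) := LinearMap.congr_fun hB θ.2.1
      have e3 : LinearMap.trace k X.V2 (C ∘ₗ θ.2.2) = ζ (ι3 θ.2.2) := LinearMap.congr_fun hC θ.2.2
      rw [e1, e2, e3, ← map_add, ← map_add, ← hθ]
    have hz : ∀ g, ζ (phi X Y g) = 0 := fun g => hζ _ ⟨g, rfl⟩
    refine ⟨A, B, C, ⟨?_, ?_, ?_⟩, ?_⟩
    · -- R3 : F ∘ A + H ∘ C = 0, from the g3-component
      apply QAux.eq_zero_of_trace_pair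
      intro g3
      have h0 := hz (0, 0, g3)
      rw [phi_apply] at h0
      simp only [LinearMap.zero_comp, LinearMap.comp_zero, sub_zero, zero_sub] at h0
      rw [hsum] at h0
      simp only [LinearMap.comp_zero, map_zero, add_zero, zero_add] at h0
      have r1 : LinearMap.trace k X.V1 (A ∘ₗ (g3 ∘ₗ X.r13)) =
          LinearMap.trace k X.V3 ((X.r13 ∘ₗ A) ∘ₗ g3) := by
        rw [← LinearMap.comp_assoc, LinearMap.trace_comp_comm' X.r13 (A ∘ₗ g3),
          LinearMap.comp_assoc]
      have r2 : LinearMap.trace k X.V2 (C ∘ₗ (g3 ∘ₗ X.r23)) =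
          LinearMap.trace k X.V3 ((X.r23 ∘ₗ C) ∘ₗ g3) := by
        rw [← LinearMap.comp_assoc, LinearMap.trace_comp_comm' X.r23 (C ∘ₗ g3),
          LinearMap.comp_assoc]
      rw [r1, r2, ← map_add, ← LinearMap.add_comp] at h0
      exact h0
    · -- R2 : G ∘ B = C ∘ H'
      rw [← sub_eq_zero]
      apply QAux.eq_zero_of_trace_pair
      intro g2
      have h0 := hz (0, g2, 0)
      rw [phi_apply] at h0
      simp only [LinearMap.zero_comp, LinearMap.comp_zero, sub_zero, zero_sub] at h0
      rw [hsum] at h0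
      simp only [LinearMap.comp_zero, map_zero, add_zero, zero_add] at h0
      have hneg : C ∘ₗ (-(Y.r23 ∘ₗ g2)) = -(C ∘ₗ (Y.r23 ∘ₗ g2)) := by
        ext x; simp
      rw [hneg, map_neg] at h0
      have r1 : LinearMap.trace k X.V1 (B ∘ₗ (g2 ∘ₗ X.r12)) =
          LinearMap.trace k X.V2 ((X.r12 ∘ₗ B) ∘ₗ g2) := by
        rw [← LinearMap.comp_assoc, LinearMap.trace_comp_comm' X.r12 (B ∘ₗ g2),
          LinearMap.comp_assoc]
      have r2 : LinearMap.trace k X.V2 (C ∘ₗ (Y.r23 ∘ₗ g2)) =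
          LinearMap.trace k X.V2 ((C ∘ₗ Y.r23) ∘ₗ g2) := by
        rw [LinearMap.comp_assoc]
      rw [r1, r2] at h0
      rw [LinearMap.sub_comp, map_sub]
      linear_combination h0
    · -- R1 : A ∘ F' + B ∘ G' = 0
      apply QAux.eq_zero_of_trace_pair
      intro g1
      have h0 := hz (g1, 0, 0)
      rw [phi_apply] at h0
      simp only [LinearMap.zero_comp, LinearMap.comp_zero, zero_sub, sub_zero] at h0
      rw [hsum] at h0
      have hnegA : A ∘ₗ (-(Y.r13 ∘ₗ g1)) = -(A ∘ₗ (Y.r13 ∘ₗ g1)) := by ext x; simp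
      have hnegB : B ∘ₗ (-(Y.r12 ∘ₗ g1)) = -(B ∘ₗ (Y.r12 ∘ₗ g1)) := by ext x; simp
      rw [hnegA, hnegB, map_neg, map_neg] at h0
      simp only [LinearMap.comp_zero, map_zero, add_zero] at h0
      rw [LinearMap.add_comp, map_add, LinearMap.comp_assoc, LinearMap.comp_assoc]
      linear_combination -h0
    · -- nonzero
      rintro ⟨rfl, rfl, rfl⟩
      exact hζ0 (LinearMap.ext fun θ => by rw [hsum]; simp)
  · rintro ⟨A, B, C, ⟨h3, h2, h1⟩, hne0⟩ hext0
    rw [ext1_eq_zero_iff_surj] at hext0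
    have hzero : ∀ θ : ((X.V1 →ₗ[k] Y.V3) × (X.V1 →ₗ[k] Y.V2) × (X.V2 →ₗ[k] Y.V3)),
        LinearMap.trace k X.V1 (A ∘ₗ θ.1) + LinearMap.trace k X.V1 (B ∘ₗ θ.2.1) +
          LinearMap.trace k X.V2 (C ∘ₗ θ.2.2) = 0 := by
      intro θ
      have : θ ∈ LinearMap.range (phi X Y) := hext0 ▸ Submodule.mem_top
      obtain ⟨g, rfl⟩ := this
      rw [phi_apply]
      have hsubA : A ∘ₗ (g.2.2 ∘ₗ X.r13 - Y.r13 ∘ₗ g.1) =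
          A ∘ₗ (g.2.2 ∘ₗ X.r13) - A ∘ₗ (Y.r13 ∘ₗ g.1) := by ext x; simp
      have hsubB : B ∘ₗ (g.2.1 ∘ₗ X.r12 - Y.r12 ∘ₗ g.1) =
          B ∘ₗ (g.2.1 ∘ₗ X.r12) - B ∘ₗ (Y.r12 ∘ₗ g.1) := by ext x; simp
      have hsubC : C ∘ₗ (g.2.2 ∘ₗ X.r23 - Y.r23 ∘ₗ g.2.1) =
          C ∘ₗ (g.2.2 ∘ₗ X.r23) - C ∘ₗ (Y.r23 ∘ₗ g.2.1) := by ext x; simp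
      rw [hsubA, hsubB, hsubC, map_sub, map_sub, map_sub]
      have rA : LinearMap.trace k X.V1 (A ∘ₗ (g.2.2 ∘ₗ X.r13)) =
          LinearMap.trace k X.V3 ((X.r13 ∘ₗ A) ∘ₗ g.2.2) := by
        rw [← LinearMap.comp_assoc, LinearMap.trace_comp_comm' X.r13 (A ∘ₗ g.2.2),
          LinearMap.comp_assoc]
      have rC : LinearMap.trace k X.V2 (C ∘ₗ (g.2.2 ∘ₗ X.r23)) =
          LinearMap.trace k X.V3 ((X.r23 ∘ₗ C) ∘ₗ g.2.2) := by
        rw [← LinearMap.comp_assoc, LinearMap.trace_comp_comm' X.r23 (C ∘ₗ g.2.2),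
          LinearMap.comp_assoc]
      have rB : LinearMap.trace k X.V1 (B ∘ₗ (g.2.1 ∘ₗ X.r12)) =
          LinearMap.trace k X.V2 ((X.r12 ∘ₗ B) ∘ₗ g.2.1) := by
        rw [← LinearMap.comp_assoc, LinearMap.trace_comp_comm' X.r12 (B ∘ₗ g.2.1),
          LinearMap.comp_assoc]
      have key3 : LinearMap.trace k X.V3 ((X.r13 ∘ₗ A) ∘ₗ g.2.2) +
          LinearMap.trace k X.V3 ((X.r23 ∘ₗ C) ∘ₗ g.2.2) = 0 := by
        rw [← map_add, ← LinearMap.add_comp, h3, LinearMap.zero_comp, map_zero]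
      have key2 : LinearMap.trace k X.V2 ((X.r12 ∘ₗ B) ∘ₗ g.2.1) =
          LinearMap.trace k X.V2 (C ∘ₗ (Y.r23 ∘ₗ g.2.1)) := by
        rw [h2, LinearMap.comp_assoc]
      have key1 : LinearMap.trace k X.V1 (A ∘ₗ (Y.r13 ∘ₗ g.1)) +
          LinearMap.trace k X.V1 (B ∘ₗ (Y.r12 ∘ₗ g.1)) = 0 := by
        rw [← LinearMap.comp_assoc, ← LinearMap.comp_assoc, ← map_add, ← LinearMap.add_comp, h1,
          LinearMap.zero_comp, map_zero]
      rw [rA, rC, rB, key2]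
      linear_combination key3 - key1
    have hA0 : A = 0 := by
      apply QAux.eq_zero_of_trace_pair
      intro θ1
      have := hzero (θ1, 0, 0)
      simpa using this
    have hB0 : B = 0 := by
      apply QAux.eq_zero_of_trace_pair
      intro θ2
      have := hzero (0, θ2, 0)
      simpa using this
    have hC0 : C = 0 := by
      apply QAux.eq_zero_of_trace_pair
      intro θ3
      have := hzero (0, 0, θ3)
      simpa using this
    exact hne0 ⟨hA0, hB0, hC0⟩

end RepQ1
/-! ### Kronecker pencil lemmas -/

namespace QAux

variable {k : Type u} [Field k]

section Pencil

variable {U W U' W' : Type u} [AddCommGroup U] [Module k U] [AddCommGroup W] [Module k W]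
  [AddCommGroup U'] [Module k U'] [AddCommGroup W'] [Module k W']

/-- Every nonzero combination of the pencil `(a, b)` is injective. -/
def PencilInj (a b : U →ₗ[k] W) : Prop :=
  ∀ c d : k, ¬(c = 0 ∧ d = 0) → Function.Injective (c • a + d • b)

/-- Every nonzero combination of the pencil `(a, b)` is surjective. -/
def PencilSurj (a b : U →ₗ[k] W) : Prop :=
  ∀ c d : k, ¬(c = 0 ∧ d = 0) → Function.Surjective (c • a + d • b)

lemma PencilInj.a {a b : U →ₗ[k] W} (h : PencilInj a b) : Function.Injective a := by
  have := h 1 0 (by simp)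
  simpa using this

lemma PencilInj.b {a b : U →ₗ[k] W} (h : PencilInj a b) : Function.Injective b := by
  have := h 0 1 (by simp)
  simpa using this

lemma PencilSurj.a {a b : U →ₗ[k] W} (h : PencilSurj a b) : Function.Surjective a := by
  have := h 1 0 (by simp)
  simpa using this

lemma PencilSurj.b {a b : U →ₗ[k] W} (h : PencilSurj a b) : Function.Surjective b := by
  have := h 0 1 (by simp)
  simpa using this

lemma inj_zero {A B : Type u} [AddCommGroup A] [Module k A] [AddCommGroup B] [Module k B]
    {f : A →ₗ[k] B} (h : Function.Injective f) {x : A} (hx : f x = 0) : x = 0 := by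
  apply h
  rw [hx, map_zero]

lemma inj_of_ker {A B : Type u} [AddCommGroup A] [Module k A] [AddCommGroup B] [Module k B]
    (f : A →ₗ[k] B) (h : ∀ x, f x = 0 → x = 0) : Function.Injective f := by
  rw [← LinearMap.ker_eq_bot]
  exact LinearMap.ker_eq_bot'.mpr h

/-- Eigenvalue argument: a pencil-injective pair has no nonzero "invariant" subspace
with `a Z = b Z`. -/
lemma no_invariant [IsAlgClosed k] [FiniteDimensional k U] [FiniteDimensional k W]
    {a b : U →ₗ[k] W} (hp : PencilInj a b) (Z : Submodule k U) (hZ : Z ≠ ⊥)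
    (h : Z.map a = Z.map b) : False := by
  have hbinj : Function.Injective b := hp.b
  let eb : Z ≃ₗ[k] Z.map b := Submodule.equivMapOfInjective b hbinj Z
  have hmem : ∀ z : Z, a (z : U) ∈ Z.map b := by
    intro z
    rw [← h]
    exact Submodule.mem_map_of_mem z.2
  let a' : Z →ₗ[k] Z.map b := (a.domRestrict Z).codRestrict (Z.map b) hmem
  let ψ : Module.End k Z := eb.symm.toLinearMap ∘ₗ a'
  have : Nontrivial Z := Submodule.nontrivial_iff_ne_bot.mpr hZ
  obtain ⟨μ, hμ⟩ := Module.End.exists_eigenvalue ψ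
  obtain ⟨v, hv⟩ := hμ.exists_hasEigenvector
  have happ : a (v : U) = μ • (b (v : U)) := by
    have h1 : a' v = eb (ψ v) := by
      show a' v = eb (eb.symm (a' v))
      rw [LinearEquiv.apply_symm_apply]
    rw [hv.apply_eq_smul, map_smul] at h1
    have h2 : ((a' v : W)) = a (v : U) := rfl
    have h3 : ((eb v : W)) = b (v : U) := rfl
    rw [← h2, h1]
    show ((μ • eb v : Z.map b) : W) = μ • (b (v : U))
    rw [Submodule.coe_smul, h3]
  have hvne : (v : U) ≠ 0 := fun hh => hv.right (Submodule.coe_eq_zero.mp hh)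
  have : ((1 : k) • a + (-μ) • b) (v : U) = 0 := by
    simp [happ]
  exact hvne (hp 1 (-μ) (by simp) (by rw [this, map_zero]))

/-- A nonzero subrepresentation of a pencil-injective pair has defect at most `-1`. -/
lemma subrep_defect [IsAlgClosed k] [FiniteDimensional k U] [FiniteDimensional k W]
    {a b : U →ₗ[k] W} (hp : PencilInj a b) (U1 : Submodule k U) (U2 : Submodule k W)
    (ha : U1.map a ≤ U2) (hb : U1.map b ≤ U2) (hne : ¬(U1 = ⊥ ∧ U2 = ⊥)) :
    finrank k U1 + 1 ≤ finrank k U2 := by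
  by_cases h1 : U1 = ⊥
  · have h2 : U2 ≠ ⊥ := fun h2 => hne ⟨h1, h2⟩
    have : Nontrivial U2 := Submodule.nontrivial_iff_ne_bot.mpr h2
    have : 0 < finrank k U2 := finrank_pos
    subst h1
    rw [finrank_bot]
    omega
  · by_contra hcon
    push_neg at hcon
    have hle : finrank k U2 ≤ finrank k U1 := by omega
    have hma : finrank k (U1.map a) = finrank k U1 :=
      (Submodule.equivMapOfInjective a hp.a U1).finrank_eq.symm
    have hmb : finrank k (U1.map b) = finrank k U1 :=
      (Submodule.equivMapOfInjective b hp.b U1).finrank_eq.symm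
    have hea : U1.map a = U2 := Submodule.eq_of_le_of_finrank_le ha (by omega)
    have heb : U1.map b = U2 := Submodule.eq_of_le_of_finrank_le hb (by omega)
    exact no_invariant hp U1 h1 (hea.trans heb.symm)

/-- Mono lemma: a nonzero homomorphism from a defect `-1` pencil-injective pair to a
pencil-injective pair is injective at both vertices. -/
lemma mono [IsAlgClosed k] [FiniteDimensional k U] [FiniteDimensional k W]
    [FiniteDimensional k U'] [FiniteDimensional k W']
    {a b : U →ₗ[k] W} {a' b' : U' →ₗ[k] W'}
    (hp : PencilInj a b) (hp' : PencilInj a' b')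
    (hd' : finrank k W' = finrank k U' + 1)
    (u1 : U' →ₗ[k] U) (u2 : W' →ₗ[k] W)
    (c1 : u2 ∘ₗ a' = a ∘ₗ u1) (c2 : u2 ∘ₗ b' = b ∘ₗ u1)
    (hne : ¬(u1 = 0 ∧ u2 = 0)) :
    Function.Injective u1 ∧ Function.Injective u2 := by
  have hK1a : (LinearMap.ker u1).map a' ≤ LinearMap.ker u2 := by
    rintro _ ⟨z, hz, rfl⟩
    rw [LinearMap.mem_ker] at *
    have := LinearMap.congr_fun c1 z
    simp only [LinearMap.coe_comp, Function.comp_apply] at this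
    rw [this, hz, map_zero]
  have hK1b : (LinearMap.ker u1).map b' ≤ LinearMap.ker u2 := by
    rintro _ ⟨z, hz, rfl⟩
    rw [LinearMap.mem_ker] at *
    have := LinearMap.congr_fun c2 z
    simp only [LinearMap.coe_comp, Function.comp_apply] at this
    rw [this, hz, map_zero]
  have hI1a : (LinearMap.range u1).map a ≤ LinearMap.range u2 := by
    rintro _ ⟨_, ⟨x, rfl⟩, rfl⟩
    have := LinearMap.congr_fun c1 x
    simp only [LinearMap.coe_comp, Function.comp_apply] at this
    exact ⟨a' x, this⟩
  have hI1b : (LinearMap.range u1).map b ≤ LinearMap.range u2 := by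
    rintro _ ⟨_, ⟨x, rfl⟩, rfl⟩
    have := LinearMap.congr_fun c2 x
    simp only [LinearMap.coe_comp, Function.comp_apply] at this
    exact ⟨b' x, this⟩
  by_cases hker : LinearMap.ker u1 = ⊥ ∧ LinearMap.ker u2 = ⊥
  · exact ⟨LinearMap.ker_eq_bot.mp hker.1, LinearMap.ker_eq_bot.mp hker.2⟩
  exfalso
  have hKdef := subrep_defect hp' (LinearMap.ker u1) (LinearMap.ker u2) hK1a hK1b hker
  have hIne : ¬(LinearMap.range u1 = ⊥ ∧ LinearMap.range u2 = ⊥) := by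
    rintro ⟨h1, h2⟩
    exact hne ⟨LinearMap.range_eq_bot.mp h1, LinearMap.range_eq_bot.mp h2⟩
  have hIdef := subrep_defect hp (LinearMap.range u1) (LinearMap.range u2) hI1a hI1b hIne
  have hrn1 := LinearMap.finrank_range_add_finrank_ker u1
  have hrn2 := LinearMap.finrank_range_add_finrank_ker u2
  omega

end Pencil

end QAux
namespace QAux

variable {k : Type u} [Field k]

section LALB

variable {U W U' W' : Type u} [AddCommGroup U] [Module k U] [AddCommGroup W] [Module k W]
  [AddCommGroup U'] [Module k U'] [AddCommGroup W'] [Module k W']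
  [FiniteDimensional k U] [FiniteDimensional k W]
  [FiniteDimensional k U'] [FiniteDimensional k W']

/-- Pairs in the extension-dual of two injective-type Kronecker pencils force a strict
dimension drop. -/
lemma LA [IsAlgClosed k] {a b : U →ₗ[k] W} {a' b' : U' →ₗ[k] W'}
    (hp : PencilInj a b) (hp' : PencilInj a' b')
    (hd' : finrank k W' = finrank k U' + 1)
    (P Q : W' →ₗ[k] U) (hPQ : ¬(P = 0 ∧ Q = 0))
    (r1 : a ∘ₗ P + b ∘ₗ Q = 0) (r2 : P ∘ₗ a' + Q ∘ₗ b' = 0) :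
    finrank k W' ≤ finrank k U := by
  classical
  set μm : U' →ₗ[k] (W' × W') := a'.prod b' with hμm
  set R : Submodule k (W' × W') := LinearMap.range μm with hR
  let cmap : W' →ₗ[k] ((W' × W') ⧸ R) := R.mkQ ∘ₗ LinearMap.inl k W' W'
  let dmap : W' →ₗ[k] ((W' × W') ⧸ R) := R.mkQ ∘ₗ LinearMap.inr k W' W'
  have hler : R ≤ LinearMap.ker (P.coprod Q) := by
    rintro _ ⟨x, rfl⟩
    rw [LinearMap.mem_ker]
    have := LinearMap.congr_fun r2 x
    simpa [hμm] using this
  let Pbar : ((W' × W') ⧸ R) →ₗ[k] U := R.liftQ (P.coprod Q) hler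
  have hPbar_c : ∀ w, Pbar (cmap w) = P w := by
    intro w
    simp [Pbar, cmap]
  have hPbar_d : ∀ w, Pbar (dmap w) = Q w := by
    intro w
    simp [Pbar, dmap]
  -- the shifted pencil is injective
  have hpT : PencilInj dmap (-cmap) := by
    intro c0 d0 hcd
    apply inj_of_ker
    intro w hw
    have hw' : R.mkQ (-(d0 • w), c0 • w) = 0 := by
      have hval : (c0 • dmap + d0 • (-cmap)) w = R.mkQ (-(d0 • w), c0 • w) := by
        have hsplit : ((-(d0 • w), c0 • w) : W' × W') =
            c0 • ((0 : W'), w) - d0 • ((w, (0 : W'))) := by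
          ext <;> simp
        rw [hsplit, map_sub, map_smul, map_smul]
        simp [dmap, cmap, sub_eq_add_neg]
      rw [← hval, hw]
    rw [Submodule.mkQ_apply, Submodule.Quotient.mk_eq_zero] at hw'
    obtain ⟨x, hx⟩ := hw'
    have hx1 : a' x = -(d0 • w) := congrArg Prod.fst hx
    have hx2 : b' x = c0 • w := congrArg Prod.snd hx
    have hx0 : (c0 • a' + d0 • b') x = 0 := by
      simp [hx1, hx2, smul_smul, mul_comm]
    have hxz : x = 0 := hp' c0 d0 hcd (by rw [hx0, map_zero])
    rw [hxz, map_zero] at hx1 hx2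
    rcases not_and_or.mp hcd with hc | hd
    · have := hx2.symm
      rcases smul_eq_zero.mp this with h | h
      · exact absurd h hc
      · exact h
    · have := hx1.symm
      have : d0 • w = 0 := by
        have := neg_eq_zero.mp (hx1.symm ▸ rfl : -(d0 • w) = 0)
        exact this
      rcases smul_eq_zero.mp this with h | h
      · exact absurd h hd
      · exact h
  -- dimension of the quotient
  have hμinj : Function.Injective μm := by
    apply inj_of_ker
    intro x hx
    have h1 : a' x = 0 := congrArg Prod.fst hx
    exact hp'.a (by rw [h1, map_zero])
  have hfr : finrank k R = finrank k U' := LinearMap.finrank_range_of_inj hμinj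
  have hq := Submodule.finrank_quotient_add_finrank R
  have hprod : finrank k (W' × W') = finrank k W' + finrank k W' := by
    rw [Module.finrank_prod]
  have hL : finrank k ((W' × W') ⧸ R) = finrank k W' + 1 := by omega
  -- the homomorphism
  have hQ : Q ≠ 0 := by
    intro hQ0
    apply hPQ
    refine ⟨?_, hQ0⟩
    ext x
    have := LinearMap.congr_fun r1 x
    rw [hQ0] at this
    simp only [LinearMap.add_apply, LinearMap.coe_comp, Function.comp_apply,
      LinearMap.zero_comp, LinearMap.zero_apply, add_zero] at this
    exact hp.a (by simpa using this)
  have c1 : (a ∘ₗ Pbar) ∘ₗ dmap = a ∘ₗ Q := by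
    ext w
    simp only [LinearMap.coe_comp, Function.comp_apply]
    rw [hPbar_d]
  have c2 : (a ∘ₗ Pbar) ∘ₗ (-cmap) = b ∘ₗ Q := by
    ext w
    simp only [LinearMap.coe_comp, Function.comp_apply, LinearMap.neg_apply, map_neg]
    rw [hPbar_c]
    have h := LinearMap.congr_fun r1 w
    simp only [LinearMap.add_apply, LinearMap.coe_comp, Function.comp_apply,
      LinearMap.zero_apply] at h
    have h2 : a (P w) = -(b (Q w)) := by rwa [add_eq_zero_iff_eq_neg] at h
    rw [h2, neg_neg]
  have hm := mono hp hpT (by omega) Q (a ∘ₗ Pbar) c1 c2 (fun h => hQ h.1)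
  exact LinearMap.finrank_le_finrank_of_injective hm.1

/-- Single-map version of `LA` for the crossed intertwining relation. -/
lemma LB [IsAlgClosed k] {a b : U →ₗ[k] W} {a' b' : U' →ₗ[k] W'}
    (hp : PencilInj a b) (hp' : PencilInj a' b')
    (hd' : finrank k W' = finrank k U' + 1)
    (A : W' →ₗ[k] U) (hA : A ≠ 0)
    (rel : a ∘ₗ (A ∘ₗ b') = b ∘ₗ (A ∘ₗ a')) :
    finrank k W' ≤ finrank k U := by
  classical
  set κ : (U × U) →ₗ[k] W := a.coprod b with hκ
  set K : Submodule k (U × U) := LinearMap.ker κ with hK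
  let p : K →ₗ[k] U := (LinearMap.fst k U U) ∘ₗ K.subtype
  let q : K →ₗ[k] U := (LinearMap.snd k U U) ∘ₗ K.subtype
  have hpq : PencilInj p q := by
    intro c0 d0 hcd
    apply inj_of_ker
    intro z hz
    obtain ⟨⟨x, y⟩, hxy⟩ := z
    have hmem : a x + b y = 0 := hxy
    have hz' : c0 • x + d0 • y = 0 := by
      have : (c0 • p + d0 • q) ⟨(x, y), hxy⟩ = c0 • x + d0 • y := by
        simp [p, q]
      rw [this] at hz
      exact hz
    have hx0 : x = 0 := by
      have hcombo : (d0 • a + (-c0) • b) x = 0 := by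
        have h1 : a x = -(b y) := by rwa [add_eq_zero_iff_eq_neg] at hmem
        have h2 : d0 • y = -(c0 • x) := by
          have := hz'
          rw [add_comm] at this
          rwa [add_eq_zero_iff_eq_neg] at this
        simp only [LinearMap.add_apply, LinearMap.smul_apply, LinearMap.neg_apply]
        rw [h1]
        have hsw : d0 • -(b y) = -(b (d0 • y)) := by rw [smul_neg, ← map_smul]
        rw [hsw, h2]
        simp [map_neg, map_smul]
      by_cases hd0 : d0 = 0
      · rcases not_and_or.mp hcd with hc | hd
        · -- c0 ≠ 0, d0 = 0 : from hz', c0 • x = 0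
          rw [hd0, zero_smul, add_zero] at hz'
          rcases smul_eq_zero.mp hz' with h | h
          · exact absurd h hc
          · exact h
        · exact absurd hd0 hd
      · exact inj_zero (hp d0 (-c0) (fun hh => hd0 hh.1)) hcombo
    have hy0 : y = 0 := by
      rw [hx0, map_zero, zero_add] at hmem
      exact hp.b (by rw [hmem, map_zero])
    apply Subtype.ext
    show ((x, y) : U × U) = 0
    rw [Prod.mk_eq_zero]
    exact ⟨hx0, hy0⟩
  have hmemχ : ∀ x : U', ((A ∘ₗ b').prod (-(A ∘ₗ a'))) x ∈ K := by
    intro x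
    rw [hK, LinearMap.mem_ker]
    have := LinearMap.congr_fun rel x
    simp only [LinearMap.coe_comp, Function.comp_apply] at this
    simp [κ, this]
  let χ1 : U' →ₗ[k] K := ((A ∘ₗ b').prod (-(A ∘ₗ a'))).codRestrict K hmemχ
  have hb' : PencilInj b' (-a') := by
    intro c0 d0 hcd
    have : c0 • b' + d0 • (-a') = (-d0) • a' + c0 • b' := by
      ext x
      simp only [LinearMap.add_apply, LinearMap.smul_apply, LinearMap.neg_apply, neg_smul,
        smul_neg]
      abel
    rw [this]
    exact hp' (-d0) c0 (by
      rintro ⟨h1, h2⟩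
      exact hcd ⟨h2, neg_eq_zero.mp h1⟩)
  have c1 : A ∘ₗ b' = p ∘ₗ χ1 := by
    ext x
    simp [χ1, p]
  have c2 : A ∘ₗ (-a') = q ∘ₗ χ1 := by
    ext x
    simp [χ1, q]
  have hm := mono hpq hb' hd' χ1 A c1 c2 (fun h => hA h.2)
  exact LinearMap.finrank_le_finrank_of_injective hm.2

lemma dualMap_add' (f g : U →ₗ[k] W) : (f + g).dualMap = f.dualMap + g.dualMap := by
  ext ψ x
  simp

lemma dualMap_smul' (c : k) (f : U →ₗ[k] W) : (c • f).dualMap = c • f.dualMap := by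
  ext ψ x
  simp

lemma dualMap_zero' : ((0 : U →ₗ[k] W)).dualMap = 0 := by
  ext ψ x
  simp

lemma dualMap_ne_zero {f : U →ₗ[k] W} (hf : f ≠ 0) : f.dualMap ≠ 0 := by
  intro h
  apply hf
  ext x
  rw [LinearMap.zero_apply, ← Module.forall_dual_apply_eq_zero_iff k (f x)]
  intro ψ
  have := LinearMap.congr_fun (LinearMap.congr_fun h ψ) x
  simpa using this

lemma PencilSurj.dual {a b : U →ₗ[k] W} (h : PencilSurj a b) :
    PencilInj (a.dualMap) (b.dualMap) := by
  intro c d hcd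
  have : c • a.dualMap + d • b.dualMap = (c • a + d • b).dualMap := by
    rw [dualMap_add', dualMap_smul', dualMap_smul']
  rw [this]
  exact LinearMap.dualMap_injective_of_surjective (h c d hcd)

/-- Surjective-pencil version of `LA`, by dualising. -/
lemma LA' [IsAlgClosed k] {a b : U →ₗ[k] W} {a' b' : U' →ₗ[k] W'}
    (hp : PencilSurj a b) (hp' : PencilSurj a' b')
    (hd : finrank k U = finrank k W + 1)
    (P Q : W' →ₗ[k] U) (hPQ : ¬(P = 0 ∧ Q = 0))
    (r1 : a ∘ₗ P + b ∘ₗ Q = 0) (r2 : P ∘ₗ a' + Q ∘ₗ b' = 0) :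
    finrank k U ≤ finrank k W' := by
  have h := LA (hp := hp'.dual) (hp' := hp.dual)
    (hd' := by rw [Subspace.dual_finrank_eq, Subspace.dual_finrank_eq, hd])
    (P := P.dualMap) (Q := Q.dualMap)
    (hPQ := by
      rintro ⟨h1, h2⟩
      rcases not_and_or.mp hPQ with h | h
      · exact dualMap_ne_zero h h1
      · exact dualMap_ne_zero h h2)
    (r1 := by
      rw [LinearMap.dualMap_comp_dualMap, LinearMap.dualMap_comp_dualMap, ← dualMap_add', r2,
        dualMap_zero'])
    (r2 := by
      rw [LinearMap.dualMap_comp_dualMap, LinearMap.dualMap_comp_dualMap, ← dualMap_add', r1,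
        dualMap_zero'])
  rw [Subspace.dual_finrank_eq, Subspace.dual_finrank_eq] at h
  exact h

/-- Surjective-pencil version of `LB`, by dualising. -/
lemma LB' [IsAlgClosed k] {a b : U →ₗ[k] W} {a' b' : U' →ₗ[k] W'}
    (hp : PencilSurj a b) (hp' : PencilSurj a' b')
    (hd : finrank k U = finrank k W + 1)
    (A : W' →ₗ[k] U) (hA : A ≠ 0)
    (rel : a ∘ₗ (A ∘ₗ b') = b ∘ₗ (A ∘ₗ a')) :
    finrank k U ≤ finrank k W' := by
  have h := LB (hp := hp'.dual) (hp' := hp.dual)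
    (hd' := by rw [Subspace.dual_finrank_eq, Subspace.dual_finrank_eq, hd])
    (A := A.dualMap) (hA := dualMap_ne_zero hA)
    (rel := by
      rw [LinearMap.dualMap_comp_dualMap, LinearMap.dualMap_comp_dualMap,
        LinearMap.dualMap_comp_dualMap, LinearMap.dualMap_comp_dualMap]
      rw [LinearMap.comp_assoc, LinearMap.comp_assoc, rel])
  rw [Subspace.dual_finrank_eq, Subspace.dual_finrank_eq] at h
  exact h

end LALB

end QAux
/-! ### Endomorphism arguments for exceptional representations -/

namespace QAux

variable {k : Type u} [Field k]

variable {V W : Type u} [AddCommGroup V] [Module k V] [AddCommGroup W] [Module k W]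

lemma smulRight_ne_zero {ψ : Module.Dual k V} {w : W} (hψ : ψ ≠ 0) (hw : w ≠ 0) :
    ψ.smulRight w ≠ 0 := by
  intro h
  obtain ⟨x, hx⟩ := DFunLike.ne_iff.mp hψ
  have := LinearMap.congr_fun h x
  simp only [LinearMap.smulRight_apply, LinearMap.zero_apply] at this
  rcases smul_eq_zero.mp this with h1 | h1
  · exact hx (by simpa using h1)
  · exact hw h1

lemma smul_cancel {c : k} {x : V} (hc : c ≠ 0) (h : c • x = 0) : x = 0 := by
  rcases smul_eq_zero.mp h with h | h
  · exact absurd h hc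
  · exact h

lemma rankone_not_scalar [FiniteDimensional k V] (ψ : Module.Dual k V) (w : V)
    (hψ : ψ ≠ 0) (hw : w ≠ 0) (hdim : 2 ≤ finrank k V) {c : k}
    (hc : ψ.smulRight w = c • (LinearMap.id : V →ₗ[k] V)) : False := by
  have hker : LinearMap.ker ψ ≠ ⊥ := by
    intro h
    have h1 : finrank k (LinearMap.ker ψ) = 0 := by rw [h, finrank_bot]
    have h2 := LinearMap.finrank_range_add_finrank_ker ψ
    have h3 : finrank k (LinearMap.range ψ) ≤ finrank k k := Submodule.finrank_le _
    rw [Module.finrank_self] at h3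
    omega
  obtain ⟨x, hxk, hx0⟩ := Submodule.exists_mem_ne_zero_of_ne_bot hker
  have h1 := LinearMap.congr_fun hc x
  rw [LinearMap.mem_ker] at hxk
  simp only [LinearMap.smulRight_apply, hxk, zero_smul, LinearMap.smul_apply,
    LinearMap.id_coe, id_eq] at h1
  have hc0 : c = 0 := by
    by_contra hcne
    exact hx0 (smul_cancel hcne h1.symm)
  rw [hc0, zero_smul] at hc
  exact smulRight_ne_zero hψ hw hc

end QAux

namespace RepQ1

open QAux

variable {k : Type u} [Field k]

lemma id_mem_homSpace (X : RepQ1 k) :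
    ((LinearMap.id, LinearMap.id, LinearMap.id) :
      (X.V1 →ₗ[k] X.V1) × (X.V2 →ₗ[k] X.V2) × (X.V3 →ₗ[k] X.V3)) ∈ homSpace X X :=
  ⟨by simp, by simp, by simp⟩

/-- In an exceptional representation every endomorphism triple is scalar. -/
lemma scalar_of_hom_one {X : RepQ1 k} (h1 : hom X X = 1)
    {φ1 : X.V1 →ₗ[k] X.V1} {φ2 : X.V2 →ₗ[k] X.V2} {φ3 : X.V3 →ₗ[k] X.V3}
    (hm : (φ1, φ2, φ3) ∈ homSpace X X) :
    ∃ c : k, φ1 = c • LinearMap.id ∧ φ2 = c • LinearMap.id ∧ φ3 = c • LinearMap.id := by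
  set e : (X.V1 →ₗ[k] X.V1) × (X.V2 →ₗ[k] X.V2) × (X.V3 →ₗ[k] X.V3) :=
    (LinearMap.id, LinearMap.id, LinearMap.id) with he
  have hid := id_mem_homSpace X
  have hene : e ≠ 0 := by
    intro h0
    -- then all three spaces are subsingletons, so homSpace lives in a subsingleton space
    have h11 : (LinearMap.id : X.V1 →ₗ[k] X.V1) = 0 := congrArg Prod.fst h0
    have h22 : (LinearMap.id : X.V2 →ₗ[k] X.V2) = 0 := congrArg (fun t => t.2.1) h0
    have h33 : (LinearMap.id : X.V3 →ₗ[k] X.V3) = 0 := congrArg (fun t => t.2.2) h0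
    have s1 : Subsingleton X.V1 :=
      subsingleton_of_forall_eq 0 fun x => by
        have := LinearMap.congr_fun h11 x; simpa using this
    have s2 : Subsingleton X.V2 :=
      subsingleton_of_forall_eq 0 fun x => by
        have := LinearMap.congr_fun h22 x; simpa using this
    have s3 : Subsingleton X.V3 :=
      subsingleton_of_forall_eq 0 fun x => by
        have := LinearMap.congr_fun h33 x; simpa using this
    have : Subsingleton ((X.V1 →ₗ[k] X.V1) × (X.V2 →ₗ[k] X.V2) × (X.V3 →ₗ[k] X.V3)) := by
      constructor
      intro a b
      refine Prod.ext ?_ (Prod.ext ?_ ?_) <;>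
        exact LinearMap.ext fun x => Subsingleton.elim _ _
    have : finrank k (homSpace X X) = 0 := by
      rw [finrank_zero_iff]
      exact ⟨fun a b => Subtype.ext (Subsingleton.elim _ _)⟩
    rw [hom] at h1
    omega
  have hsple : Submodule.span k {e} ≤ homSpace X X := by
    rw [Submodule.span_singleton_le_iff_mem]
    exact hid
  have hspan : Submodule.span k {e} = homSpace X X := by
    apply Submodule.eq_of_le_of_finrank_le hsple
    rw [hom] at h1
    rw [h1, finrank_span_singleton hene]
  have hmem : (φ1, φ2, φ3) ∈ Submodule.span k {e} := by rw [hspan]; exact hm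
  obtain ⟨c, hc⟩ := Submodule.mem_span_singleton.mp hmem
  refine ⟨c, ?_, ?_, ?_⟩
  · have := congrArg Prod.fst hc; exact this.symm
  · have := congrArg (fun t => t.2.1) hc; exact this.symm
  · have := congrArg (fun t => t.2.2) hc; exact this.symm

/-- If `G` is not surjective and `H` has a kernel then (given `hom X X = 1`) the outer
spaces are trivial  (the representation is of `M`-type). -/
lemma Mtype_of (X : RepQ1 k) (h1 : hom X X = 1)
    (hG : ¬ Function.Surjective X.r12) (hH : LinearMap.ker X.r23 ≠ ⊥) :
    Subsingleton X.V1 ∧ Subsingleton X.V3 := by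
  obtain ⟨u, huk, hu0⟩ := Submodule.exists_mem_ne_zero_of_ne_bot hH
  rw [LinearMap.mem_ker] at huk
  have hrG : LinearMap.range X.r12 ≠ ⊤ := by rwa [ne_eq, LinearMap.range_eq_top]
  obtain ⟨ζ, hζ0, hζ⟩ := exists_dual_annihilator hrG
  set φ2 : X.V2 →ₗ[k] X.V2 := ζ.smulRight u with hφ2
  have hm : ((0, φ2, 0) : (X.V1 →ₗ[k] X.V1) × (X.V2 →ₗ[k] X.V2) × (X.V3 →ₗ[k] X.V3)) ∈
      homSpace X X := by
    refine ⟨by simp, ?_, ?_⟩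
    · ext x
      simp only [LinearMap.coe_comp, Function.comp_apply, LinearMap.smulRight_apply,
        LinearMap.comp_zero, LinearMap.zero_comp, LinearMap.zero_apply, hφ2]
      rw [hζ (X.r12 x) ⟨x, rfl⟩, zero_smul]
    · ext y
      simp only [LinearMap.coe_comp, Function.comp_apply, LinearMap.smulRight_apply,
        LinearMap.zero_comp, LinearMap.zero_apply, map_smul, hφ2, huk, smul_zero]
  obtain ⟨c, hc1, hc2, hc3⟩ := scalar_of_hom_one h1 hm
  have hcne : c ≠ 0 := by
    intro h0
    rw [h0, zero_smul] at hc2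
    exact smulRight_ne_zero hζ0 hu0 hc2
  constructor
  · refine subsingleton_of_forall_eq 0 fun x => ?_
    have := LinearMap.congr_fun hc1 x
    simp only [LinearMap.zero_apply, LinearMap.smul_apply, LinearMap.id_coe, id_eq] at this
    exact (smul_cancel hcne this.symm)
  · refine subsingleton_of_forall_eq 0 fun x => ?_
    have := LinearMap.congr_fun hc3 x
    simp only [LinearMap.zero_apply, LinearMap.smul_apply, LinearMap.id_coe, id_eq] at this
    exact (smul_cancel hcne this.symm)

/-- If `G` has a kernel and `H` is not surjective then (given `hom X X = 1`) the middle
space is trivial (the representation is of `M'`-type). -/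
lemma M'type_of (X : RepQ1 k) (h1 : hom X X = 1)
    (hG : LinearMap.ker X.r12 ≠ ⊥) (hH : LinearMap.range X.r23 ≠ ⊤) :
    Subsingleton X.V2 := by
  have hV3 : Nontrivial X.V3 := by
    rw [← not_subsingleton_iff_nontrivial]
    intro hs
    apply hH
    ext x
    simp only [Submodule.mem_top, iff_true]
    exact ⟨0, Subsingleton.elim _ _⟩
  obtain ⟨v, hvk, hv0⟩ := Submodule.exists_mem_ne_zero_of_ne_bot hG
  rw [LinearMap.mem_ker] at hvk
  obtain ⟨ζ, hζ0, hζ⟩ := exists_dual_annihilator hH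
  have hFv : X.r13 v ≠ 0 := by
    intro hFv0
    have : Nontrivial X.V1 := nontrivial_of_ne v 0 hv0
    obtain ⟨ξ, hξ0⟩ := exists_dual_ne_zero (k := k) (V := X.V1)
    have hm : ((ξ.smulRight v, 0, 0) :
        (X.V1 →ₗ[k] X.V1) × (X.V2 →ₗ[k] X.V2) × (X.V3 →ₗ[k] X.V3)) ∈ homSpace X X := by
      refine ⟨?_, ?_, by simp⟩
      · ext x
        simp [hFv0]
      · ext x
        simp [hvk]
    obtain ⟨c, hc1, hc2, hc3⟩ := scalar_of_hom_one h1 hm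
    have hcne : c ≠ 0 := by
      intro h0
      rw [h0, zero_smul] at hc1
      exact smulRight_ne_zero hξ0 hv0 hc1
    obtain ⟨z, hz⟩ := exists_ne (0 : X.V3)
    have := LinearMap.congr_fun hc3 z
    simp only [LinearMap.zero_apply, LinearMap.smul_apply, LinearMap.id_coe, id_eq] at this
    exact hz (smul_cancel hcne this.symm)
  have hm : (((ζ ∘ₗ X.r13).smulRight v, 0, ζ.smulRight (X.r13 v)) :
      (X.V1 →ₗ[k] X.V1) × (X.V2 →ₗ[k] X.V2) × (X.V3 →ₗ[k] X.V3)) ∈ homSpace X X := by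
    refine ⟨?_, ?_, ?_⟩
    · ext x
      simp
    · ext x
      simp [hvk]
    · ext y
      simp only [LinearMap.coe_comp, Function.comp_apply, LinearMap.smulRight_apply,
        LinearMap.zero_comp, LinearMap.zero_apply, LinearMap.comp_zero]
      rw [hζ (X.r23 y) ⟨y, rfl⟩, zero_smul]
  obtain ⟨c, hc1, hc2, hc3⟩ := scalar_of_hom_one h1 hm
  have hcne : c ≠ 0 := by
    intro h0
    rw [h0, zero_smul] at hc3
    exact smulRight_ne_zero hζ0 hFv hc3
  refine subsingleton_of_forall_eq 0 fun x => ?_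
  have := LinearMap.congr_fun hc2 x
  simp only [LinearMap.zero_apply, LinearMap.smul_apply, LinearMap.id_coe, id_eq] at this
  exact (smul_cancel hcne this.symm)

end RepQ1
/-! ### Brick pairs and pencil injectivity/surjectivity -/

namespace QAux

variable {k : Type u} [Field k]

variable {U W : Type u} [AddCommGroup U] [Module k U] [AddCommGroup W] [Module k W]

/-- A Kronecker pair whose simultaneous endomorphisms are all scalar. -/
def BrickPair (a b : U →ₗ[k] W) : Prop :=
  ∀ (φ1 : U →ₗ[k] U) (φ2 : W →ₗ[k] W), φ2 ∘ₗ a = a ∘ₗ φ1 → φ2 ∘ₗ b = b ∘ₗ φ1 →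
    ∃ c : k, φ1 = c • LinearMap.id ∧ φ2 = c • LinearMap.id

lemma BrickPair.swap {a b : U →ₗ[k] W} (h : BrickPair a b) : BrickPair b a :=
  fun φ1 φ2 hb ha => h φ1 φ2 ha hb

lemma brick_combo_core [FiniteDimensional k U] [FiniteDimensional k W]
    {a b : U →ₗ[k] W} (hbp : BrickPair a b) {c d : k} (hd : d ≠ 0) {u : U} (hu : u ≠ 0)
    (hcombo : (c • a + d • b) u = 0) {η : Module.Dual k W} (hη : η ≠ 0)
    (hann : ∀ x, η ((c • a + d • b) x) = 0)
    (h2 : 2 ≤ finrank k U ∨ 2 ≤ finrank k W) (hWnt : Nontrivial W) : False := by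
  have hUnt : Nontrivial U := nontrivial_of_ne u 0 hu
  have hcombo' : c • a u + d • b u = 0 := by simpa using hcombo
  by_cases hau : a u = 0
  · have hbu : b u = 0 := by
      rw [hau, smul_zero, zero_add] at hcombo'
      exact smul_cancel hd hcombo'
    obtain ⟨ξ, hξ0⟩ := exists_dual_ne_zero (k := k) (V := U)
    obtain ⟨c0, hc1, hc2⟩ := hbp (ξ.smulRight u) 0
      (by ext x; simp [hau]) (by ext x; simp [hbu])
    have hc00 : c0 = 0 := by
      obtain ⟨y, hy⟩ := exists_ne (0 : W)
      have hyy := LinearMap.congr_fun hc2 y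
      simp only [LinearMap.zero_apply, LinearMap.smul_apply, LinearMap.id_coe, id_eq] at hyy
      by_contra hne
      exact hy (smul_cancel hne hyy.symm)
    rw [hc00, zero_smul] at hc1
    exact smulRight_ne_zero hξ0 hu hc1
  · set w : W := a u with hw
    have h1' : ∀ x, d * η (b x) = -(c * η (a x)) := by
      intro x
      have h := hann x
      simp only [LinearMap.add_apply, LinearMap.smul_apply, map_add, map_smul,
        smul_eq_mul] at h
      linear_combination h
    have h2' : d • b u = -(c • a u) := by
      have hh := hcombo'
      rw [add_comm] at hh
      rw [add_eq_zero_iff_eq_neg] at hh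
      rw [hh, hw]
    have hcw : (-c) • w = d • b u := by
      rw [h2', neg_smul, hw]
    have hcond_b : ∀ x, η (b x) • w = η (a x) • b u := by
      intro x
      apply smul_right_injective W hd
      calc d • (η (b x) • w) = (d * η (b x)) • w := by rw [smul_smul]
        _ = (-(c * η (a x))) • w := by rw [h1']
        _ = (η (a x) * (-c)) • w := by ring_nf
        _ = η (a x) • ((-c) • w) := by rw [mul_smul]
        _ = η (a x) • (d • b u) := by rw [hcw]
        _ = d • (η (a x) • b u) := smul_comm _ _ _
    obtain ⟨c0, hc1, hc2⟩ := hbp ((η ∘ₗ a).smulRight u) (η.smulRight w)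
      (by ext x; simp [hw])
      (by
        ext x
        simp only [LinearMap.coe_comp, Function.comp_apply, LinearMap.smulRight_apply,
          map_smul]
        exact hcond_b x)
    by_cases hc00 : c0 = 0
    · rw [hc00, zero_smul] at hc2
      exact smulRight_ne_zero hη hau hc2
    · rcases h2 with h2 | h2
      · by_cases hηa : (η ∘ₗ a) = 0
        · rw [hηa] at hc1
          have := LinearMap.congr_fun hc1 u
          simp only [LinearMap.smulRight_apply, LinearMap.zero_apply, zero_smul,
            LinearMap.smul_apply, LinearMap.id_coe, id_eq] at this
          exact hu (smul_cancel hc00 this.symm)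
        · exact rankone_not_scalar (η ∘ₗ a) u hηa hu h2 hc1
      · exact rankone_not_scalar η w hη hau h2 hc2

lemma pencilInj_aux [FiniteDimensional k U] [FiniteDimensional k W]
    {a b : U →ₗ[k] W} (hbp : BrickPair a b)
    (hdim : finrank k W = finrank k U + 1) {c d : k} (hd : d ≠ 0) :
    Function.Injective (c • a + d • b) := by
  apply inj_of_ker
  intro u hcombo
  by_contra hu0
  have hUnt : Nontrivial U := nontrivial_of_ne u 0 hu0
  have hU1 : 1 ≤ finrank k U := finrank_pos
  have hrne : LinearMap.range (c • a + d • b) ≠ ⊤ := by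
    intro h
    have h1 : finrank k (LinearMap.range (c • a + d • b)) ≤ finrank k U :=
      LinearMap.finrank_range_le _
    rw [h, finrank_top] at h1
    omega
  obtain ⟨η, hη0, hη⟩ := exists_dual_annihilator hrne
  have hWpos : 0 < finrank k W := by omega
  have hWnt : Nontrivial W := Module.nontrivial_of_finrank_pos hWpos
  exact brick_combo_core hbp hd hu0 hcombo hη0 (fun x => hη _ ⟨x, rfl⟩)
    (Or.inr (by omega)) hWnt

lemma pencilInj_of_brick [FiniteDimensional k U] [FiniteDimensional k W]
    {a b : U →ₗ[k] W} (hbp : BrickPair a b)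
    (hdim : finrank k W = finrank k U + 1) : PencilInj a b := by
  intro c d hcd
  by_cases hd : d = 0
  · have hc : c ≠ 0 := fun hc => hcd ⟨hc, hd⟩
    have h := pencilInj_aux hbp.swap hdim (c := d) (d := c) hc
    rwa [add_comm] at h
  · exact pencilInj_aux hbp hdim hd

lemma pencilSurj_aux [FiniteDimensional k U] [FiniteDimensional k W]
    {a b : U →ₗ[k] W} (hbp : BrickPair a b)
    (hdim : finrank k U = finrank k W + 1) {c d : k} (hd : d ≠ 0) :
    Function.Surjective (c • a + d • b) := by
  by_cases hW : Subsingleton W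
  · exact fun y => ⟨0, Subsingleton.elim _ _⟩
  have hWnt : Nontrivial W := not_subsingleton_iff_nontrivial.mp hW
  have hW1 : 1 ≤ finrank k W := finrank_pos
  by_contra hns
  have hrne : LinearMap.range (c • a + d • b) ≠ ⊤ := by rwa [ne_eq, LinearMap.range_eq_top]
  obtain ⟨η, hη0, hη⟩ := exists_dual_annihilator hrne
  have hkne : LinearMap.ker (c • a + d • b) ≠ ⊥ := by
    intro h
    have h1 := LinearMap.finrank_range_add_finrank_ker (c • a + d • b)
    have h2 : finrank k (LinearMap.range (c • a + d • b)) ≤ finrank k W :=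
      Submodule.finrank_le _
    rw [h, finrank_bot] at h1
    omega
  obtain ⟨u, huk, hu0⟩ := Submodule.exists_mem_ne_zero_of_ne_bot hkne
  rw [LinearMap.mem_ker] at huk
  exact brick_combo_core hbp hd hu0 huk hη0 (fun x => hη _ ⟨x, rfl⟩)
    (Or.inl (by omega)) hWnt

lemma pencilSurj_of_brick [FiniteDimensional k U] [FiniteDimensional k W]
    {a b : U →ₗ[k] W} (hbp : BrickPair a b)
    (hdim : finrank k U = finrank k W + 1) : PencilSurj a b := by
  intro c d hcd
  by_cases hd : d = 0
  · have hc : c ≠ 0 := fun hc => hcd ⟨hc, hd⟩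
    have h := pencilSurj_aux hbp.swap hdim (c := d) (d := c) hc
    rwa [add_comm] at h
  · exact pencilSurj_aux hbp hdim hd

end QAux
/-! ### Rank helpers and the root classification -/

namespace QAux

variable {k : Type u} [Field k]
variable {V W : Type u} [AddCommGroup V] [Module k V] [AddCommGroup W] [Module k W]
  [FiniteDimensional k V] [FiniteDimensional k W]

lemma finrank_le_of_surj (f : V →ₗ[k] W) (h : Function.Surjective f) :
    finrank k W ≤ finrank k V := by
  have h1 := LinearMap.finrank_range_le f
  rw [LinearMap.range_eq_top.mpr h, finrank_top] at h1
  exact h1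

lemma ker_ne_bot_of_rank_lt (f : V →ₗ[k] W) (h : finrank k W < finrank k V) :
    LinearMap.ker f ≠ ⊥ := by
  intro h0
  have h1 := LinearMap.finrank_range_add_finrank_ker f
  have h2 : finrank k (LinearMap.range f) ≤ finrank k W := Submodule.finrank_le _
  rw [h0, finrank_bot] at h1
  omega

lemma not_surj_of_rank_lt (f : V →ₗ[k] W) (h : finrank k V < finrank k W) :
    ¬ Function.Surjective f := by
  intro hs
  have := finrank_le_of_surj f hs
  omega

lemma surj_of_inj_rank_eq (f : V →ₗ[k] W) (h : finrank k V = finrank k W)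
    (hi : Function.Injective f) : Function.Surjective f := by
  rw [← LinearMap.range_eq_top]
  apply Submodule.eq_top_of_finrank_eq
  rw [LinearMap.finrank_range_of_inj hi, h]

lemma inj_of_surj_rank_eq (f : V →ₗ[k] W) (h : finrank k V = finrank k W)
    (hs : Function.Surjective f) : Function.Injective f := by
  rw [← LinearMap.ker_eq_bot]
  have h1 := LinearMap.finrank_range_add_finrank_ker f
  rw [LinearMap.range_eq_top.mpr hs, finrank_top] at h1
  have h2 : finrank k (LinearMap.ker f) = 0 := by omega
  exact Submodule.finrank_eq_zero.mp h2

lemma range_eq_top_of_subsingleton [Subsingleton W] (f : V →ₗ[k] W) :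
    LinearMap.range f = ⊤ := by
  ext x
  simp only [Submodule.mem_top, iff_true]
  exact ⟨0, Subsingleton.elim _ _⟩

lemma bij_of_subsingletons [Subsingleton V] [Subsingleton W] (f : V →ₗ[k] W) :
    Function.Bijective f :=
  ⟨fun a b _ => Subsingleton.elim a b, fun y => ⟨0, Subsingleton.elim _ _⟩⟩

end QAux

namespace QAux

/-- Arithmetic of the roots of the `Ã₂` quadratic form. -/
lemma rootSolve (d1 d2 d3 : ℕ)
    (he : 1 + (d1 * d3 + d1 * d2 + d2 * d3) = 0 + (d1 * d1 + d2 * d2 + d3 * d3)) :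
    (d2 = d3 ∧ d1 = d2 + 1) ∨ (d2 = d3 ∧ d2 = d1 + 1) ∨
    (d1 = d2 ∧ d3 = d1 + 1) ∨ (d1 = d2 ∧ d1 = d3 + 1) ∨
    (d1 = d3 ∧ d2 = d1 + 1) ∨ (d1 = d3 ∧ d1 = d2 + 1) := by
  have he' : (1 : ℤ) + (d1 * d3 + d1 * d2 + d2 * d3) = d1 * d1 + d2 * d2 + d3 * d3 := by
    zify at he
    linarith
  set x : ℤ := (d1 : ℤ) - d2 with hx
  set y : ℤ := (d2 : ℤ) - d3 with hy
  have key : x ^ 2 + x * y + y ^ 2 = 1 := by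
    rw [hx, hy]
    linear_combination -he'
  have hy2 : y ^ 2 ≤ 1 := by nlinarith [sq_nonneg (2 * x + y)]
  have hx2 : x ^ 2 ≤ 1 := by nlinarith [sq_nonneg (x + 2 * y)]
  have hxb1 : -1 ≤ x := by nlinarith [sq_nonneg (x + 1)]
  have hxb2 : x ≤ 1 := by nlinarith [sq_nonneg (x - 1)]
  have hyb1 : -1 ≤ y := by nlinarith [sq_nonneg (y + 1)]
  have hyb2 : y ≤ 1 := by nlinarith [sq_nonneg (y - 1)]
  have hxd : x = (d1 : ℤ) - d2 := hx
  have hyd : y = (d2 : ℤ) - d3 := hy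
  clear_value x y
  interval_cases x <;> interval_cases y <;> omega

end QAux

namespace RepQ1

open QAux

variable {k : Type u} [Field k]

/-- The six families of dimension vectors of exceptional representations. -/
lemma root_cases {X : RepQ1 k} (hE : IsExceptional X) :
    (finrank k X.V2 = finrank k X.V3 ∧ finrank k X.V1 = finrank k X.V2 + 1) ∨
    (finrank k X.V2 = finrank k X.V3 ∧ finrank k X.V2 = finrank k X.V1 + 1) ∨
    (finrank k X.V1 = finrank k X.V2 ∧ finrank k X.V3 = finrank k X.V1 + 1) ∨
    (finrank k X.V1 = finrank k X.V2 ∧ finrank k X.V1 = finrank k X.V3 + 1) ∨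
    (finrank k X.V1 = finrank k X.V3 ∧ finrank k X.V2 = finrank k X.V1 + 1) ∨
    (finrank k X.V1 = finrank k X.V3 ∧ finrank k X.V1 = finrank k X.V2 + 1) := by
  obtain ⟨h1, h0⟩ := hE
  have he := euler X X
  rw [h1, h0] at he
  exact QAux.rootSolve _ _ _ he

end RepQ1
/-! ### The six descriptors and the trichotomy -/

namespace QAux

variable {k : Type u} [Field k]
variable {V W : Type u} [AddCommGroup V] [Module k V] [AddCommGroup W] [Module k W]
  [FiniteDimensional k V] [FiniteDimensional k W]

lemma range_ne_top_of_rank_lt (f : V →ₗ[k] W) (h : finrank k V < finrank k W) :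
    LinearMap.range f ≠ ⊤ := by
  intro ht
  exact absurd (finrank_le_of_surj f (LinearMap.range_eq_top.mp ht)) (by omega)

lemma bij_of_ne_zero_rank_one (f : V →ₗ[k] W) (h1 : finrank k V = 1) (h2 : finrank k W = 1)
    (hf : f ≠ 0) : Function.Bijective f := by
  have hinj : Function.Injective f := by
    rw [← LinearMap.ker_eq_bot]
    by_contra hk
    have : Nontrivial (LinearMap.ker f) := Submodule.nontrivial_iff_ne_bot.mpr hk
    have hpos : 0 < finrank k (LinearMap.ker f) := finrank_pos
    have hle : finrank k (LinearMap.ker f) ≤ finrank k V := Submodule.finrank_le _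
    have : LinearMap.ker f = ⊤ := Submodule.eq_top_of_finrank_eq (by omega)
    exact hf (LinearMap.ker_eq_top.mp this)
  exact ⟨hinj, surj_of_inj_rank_eq f (by omega) hinj⟩

lemma submodule_eq_bot_of_subsingleton [Subsingleton V] (p : Submodule k V) : p = ⊥ := by
  ext x
  simp [Subsingleton.elim x 0]

lemma bij_of_inverses {f : V →ₗ[k] W} {T : W →ₗ[k] V}
    (h1 : T ∘ₗ f = LinearMap.id) (h2 : f ∘ₗ T = LinearMap.id) : Function.Bijective f := by
  constructor
  · intro x y hxy
    have hx := LinearMap.congr_fun h1 x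
    have hy := LinearMap.congr_fun h1 y
    simp only [LinearMap.coe_comp, Function.comp_apply, LinearMap.id_coe, id_eq] at hx hy
    rw [← hx, ← hy, hxy]
  · intro y
    refine ⟨T y, ?_⟩
    have := LinearMap.congr_fun h2 y
    simpa using this

lemma finrank_eq_of_inverses {f : V →ₗ[k] W} {T : W →ₗ[k] V}
    (h1 : T ∘ₗ f = LinearMap.id) (h2 : f ∘ₗ T = LinearMap.id) :
    finrank k V = finrank k W :=
  (LinearEquiv.ofBijective f (bij_of_inverses h1 h2)).finrank_eq

end QAux

namespace RepQ1

open QAux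

variable {k : Type u} [Field k]

/-- `M`-type: outer spaces trivial, middle one-dimensional. -/
def MT (X : RepQ1 k) : Prop :=
  Subsingleton X.V1 ∧ finrank k X.V2 = 1 ∧ Subsingleton X.V3

/-- `M'`-type: outer spaces one-dimensional with `r13` bijective, middle trivial. -/
def M'T (X : RepQ1 k) : Prop :=
  finrank k X.V1 = 1 ∧ Subsingleton X.V2 ∧ finrank k X.V3 = 1 ∧ Function.Bijective X.r13

/-- Preprojective type `E2`. -/
def PP2d (X : RepQ1 k) : Prop :=
  ∃ T : X.V3 →ₗ[k] X.V2, T ∘ₗ X.r23 = LinearMap.id ∧ X.r23 ∘ₗ T = LinearMap.id ∧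
    QAux.PencilInj (T ∘ₗ X.r13) X.r12 ∧ finrank k X.V2 = finrank k X.V1 + 1

/-- Preprojective type `E3`. -/
def PP3d (X : RepQ1 k) : Prop :=
  ∃ S : X.V2 →ₗ[k] X.V1, S ∘ₗ X.r12 = LinearMap.id ∧ X.r12 ∘ₗ S = LinearMap.id ∧
    QAux.PencilInj X.r13 (X.r23 ∘ₗ X.r12) ∧ finrank k X.V3 = finrank k X.V1 + 1

/-- Preinjective type `E1`. -/
def PI1d (X : RepQ1 k) : Prop :=
  ∃ T : X.V3 →ₗ[k] X.V2, T ∘ₗ X.r23 = LinearMap.id ∧ X.r23 ∘ₗ T = LinearMap.id ∧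
    QAux.PencilSurj (T ∘ₗ X.r13) X.r12 ∧ finrank k X.V1 = finrank k X.V2 + 1

/-- Preinjective type `E4`. -/
def PI4d (X : RepQ1 k) : Prop :=
  ∃ S : X.V2 →ₗ[k] X.V1, S ∘ₗ X.r12 = LinearMap.id ∧ X.r12 ∘ₗ S = LinearMap.id ∧
    QAux.PencilSurj X.r13 (X.r23 ∘ₗ X.r12) ∧ finrank k X.V1 = finrank k X.V3 + 1

lemma brick_of_H_bij {X : RepQ1 k} (h1 : hom X X = 1) (hb : Function.Bijective X.r23) :
    ∃ T : X.V3 →ₗ[k] X.V2, T ∘ₗ X.r23 = LinearMap.id ∧ X.r23 ∘ₗ T = LinearMap.id ∧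
      QAux.BrickPair (T ∘ₗ X.r13) X.r12 := by
  set e := LinearEquiv.ofBijective X.r23 hb with he
  refine ⟨e.symm.toLinearMap, ?_, ?_, ?_⟩
  · ext x
    show e.symm (X.r23 x) = x
    exact e.symm_apply_apply x
  · ext y
    show X.r23 (e.symm y) = y
    exact e.apply_symm_apply y
  · intro φ1 φ2 hpa hpb
    have hm : ((φ1, φ2, X.r23 ∘ₗ φ2 ∘ₗ e.symm.toLinearMap) :
        (X.V1 →ₗ[k] X.V1) × (X.V2 →ₗ[k] X.V2) × (X.V3 →ₗ[k] X.V3)) ∈ homSpace X X := by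
      refine ⟨?_, hpb, ?_⟩
      · ext x
        have hx := LinearMap.congr_fun hpa x
        simp only [LinearMap.coe_comp, Function.comp_apply, LinearEquiv.coe_coe] at hx ⊢
        rw [hx]
        exact e.apply_symm_apply (X.r13 (φ1 x))
      · ext y
        simp only [LinearMap.coe_comp, Function.comp_apply, LinearEquiv.coe_coe]
        rw [show e.symm (X.r23 y) = y from e.symm_apply_apply y]
    obtain ⟨c, hc1, hc2, _⟩ := scalar_of_hom_one h1 hm
    exact ⟨c, hc1, hc2⟩

lemma brick_of_G_bij {X : RepQ1 k} (h1 : hom X X = 1) (hb : Function.Bijective X.r12) :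
    ∃ S : X.V2 →ₗ[k] X.V1, S ∘ₗ X.r12 = LinearMap.id ∧ X.r12 ∘ₗ S = LinearMap.id ∧
      QAux.BrickPair X.r13 (X.r23 ∘ₗ X.r12) := by
  set e := LinearEquiv.ofBijective X.r12 hb with he
  refine ⟨e.symm.toLinearMap, ?_, ?_, ?_⟩
  · ext x
    show e.symm (X.r12 x) = x
    exact e.symm_apply_apply x
  · ext y
    show X.r12 (e.symm y) = y
    exact e.apply_symm_apply y
  · intro φ1 φ3 hpa hpb
    have hm : ((φ1, X.r12 ∘ₗ φ1 ∘ₗ e.symm.toLinearMap, φ3) :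
        (X.V1 →ₗ[k] X.V1) × (X.V2 →ₗ[k] X.V2) × (X.V3 →ₗ[k] X.V3)) ∈ homSpace X X := by
      refine ⟨hpa, ?_, ?_⟩
      · ext x
        simp only [LinearMap.coe_comp, Function.comp_apply, LinearEquiv.coe_coe]
        rw [show e.symm (X.r12 x) = x from e.symm_apply_apply x]
      · ext y
        simp only [LinearMap.coe_comp, Function.comp_apply, LinearEquiv.coe_coe]
        have hy : X.r12 (e.symm y) = y := e.apply_symm_apply y
        have hx := LinearMap.congr_fun hpb (e.symm y)
        simp only [LinearMap.coe_comp, Function.comp_apply] at hx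
        calc φ3 (X.r23 y) = φ3 (X.r23 (X.r12 (e.symm y))) := by rw [hy]
          _ = X.r23 (X.r12 (φ1 (e.symm y))) := hx
    obtain ⟨c, hc1, _, hc3⟩ := scalar_of_hom_one h1 hm
    exact ⟨c, hc1, hc3⟩

/-- Trichotomy: every exceptional representation is of one of the six types. -/
theorem trichotomy {X : RepQ1 k} (hE : IsExceptional X) :
    MT X ∨ M'T X ∨ PP2d X ∨ PP3d X ∨ PI1d X ∨ PI4d X := by
  have hhom := hE.1
  rcases root_cases hE with ⟨h23, hd⟩ | ⟨h23, hd⟩ | ⟨h12, hd⟩ | ⟨h12, hd⟩ | ⟨h13, hd⟩ | ⟨h13, hd⟩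
  · -- type 1 : (m+1, m, m) : PI1
    right; right; right; right; left
    have hHsurj : Function.Surjective X.r23 := by
      by_contra hns
      have hrne : LinearMap.range X.r23 ≠ ⊤ := by rwa [ne_eq, LinearMap.range_eq_top]
      have hGk : LinearMap.ker X.r12 ≠ ⊥ := ker_ne_bot_of_rank_lt _ (by omega)
      have hs2 := M'type_of X hhom hGk hrne
      have h20 : finrank k X.V2 = 0 := finrank_zero_iff.mpr hs2
      have hs3 : Subsingleton X.V3 := finrank_zero_iff.mp (show finrank k X.V3 = 0 by omega)
      exact hrne (range_eq_top_of_subsingleton X.r23)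
    have hHbij : Function.Bijective X.r23 :=
      ⟨inj_of_surj_rank_eq _ h23 hHsurj, hHsurj⟩
    obtain ⟨T, hTH, hHT, hbp⟩ := brick_of_H_bij hhom hHbij
    exact ⟨T, hTH, hHT, pencilSurj_of_brick hbp (by omega), by omega⟩
  · -- type 2 : (m, m+1, m+1) : PP2
    right; right; left
    have hHinj : Function.Injective X.r23 := by
      rw [← LinearMap.ker_eq_bot]
      by_contra hk
      have hGns : ¬ Function.Surjective X.r12 := not_surj_of_rank_lt _ (by omega)
      obtain ⟨s1, s3⟩ := Mtype_of X hhom hGns hk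
      have h30 : finrank k X.V3 = 0 := finrank_zero_iff.mpr s3
      omega
    have hHbij : Function.Bijective X.r23 :=
      ⟨hHinj, surj_of_inj_rank_eq _ h23 hHinj⟩
    obtain ⟨T, hTH, hHT, hbp⟩ := brick_of_H_bij hhom hHbij
    exact ⟨T, hTH, hHT, pencilInj_of_brick hbp (by omega), by omega⟩
  · -- type 3 : (m, m, m+1) : PP3
    right; right; right; left
    have hGinj : Function.Injective X.r12 := by
      rw [← LinearMap.ker_eq_bot]
      by_contra hk
      have hrne : LinearMap.range X.r23 ≠ ⊤ := range_ne_top_of_rank_lt _ (by omega)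
      have hs2 := M'type_of X hhom hk hrne
      have h20 : finrank k X.V2 = 0 := finrank_zero_iff.mpr hs2
      have hs1 : Subsingleton X.V1 := finrank_zero_iff.mp (show finrank k X.V1 = 0 by omega)
      exact hk (submodule_eq_bot_of_subsingleton _)
    have hGbij : Function.Bijective X.r12 :=
      ⟨hGinj, surj_of_inj_rank_eq _ h12 hGinj⟩
    obtain ⟨S, hSG, hGS, hbp⟩ := brick_of_G_bij hhom hGbij
    exact ⟨S, hSG, hGS, pencilInj_of_brick hbp (by omega), by omega⟩
  · -- type 4 : (m+1, m+1, m) : PI4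
    right; right; right; right; right
    have hGsurj : Function.Surjective X.r12 := by
      by_contra hns
      have hk : LinearMap.ker X.r23 ≠ ⊥ := ker_ne_bot_of_rank_lt _ (by omega)
      obtain ⟨s1, s3⟩ := Mtype_of X hhom hns hk
      have h10 : finrank k X.V1 = 0 := finrank_zero_iff.mpr s1
      omega
    have hGbij : Function.Bijective X.r12 :=
      ⟨inj_of_surj_rank_eq _ h12 hGsurj, hGsurj⟩
    obtain ⟨S, hSG, hGS, hbp⟩ := brick_of_G_bij hhom hGbij
    exact ⟨S, hSG, hGS, pencilSurj_of_brick hbp (by omega), by omega⟩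
  · -- M type : (m, m+1, m)
    left
    have hGns : ¬ Function.Surjective X.r12 := not_surj_of_rank_lt _ (by omega)
    have hk : LinearMap.ker X.r23 ≠ ⊥ := ker_ne_bot_of_rank_lt _ (by omega)
    obtain ⟨s1, s3⟩ := Mtype_of X hhom hGns hk
    have h10 : finrank k X.V1 = 0 := finrank_zero_iff.mpr s1
    exact ⟨s1, by omega, s3⟩
  · -- M' type : (m+1, m, m+1)
    right; left
    have hGk : LinearMap.ker X.r12 ≠ ⊥ := ker_ne_bot_of_rank_lt _ (by omega)
    have hrne : LinearMap.range X.r23 ≠ ⊤ := range_ne_top_of_rank_lt _ (by omega)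
    have hs2 := M'type_of X hhom hGk hrne
    have h20 : finrank k X.V2 = 0 := finrank_zero_iff.mpr hs2
    have h11 : finrank k X.V1 = 1 := by omega
    have h31 : finrank k X.V3 = 1 := by omega
    refine ⟨h11, hs2, h31, ?_⟩
    apply bij_of_ne_zero_rank_one X.r13 h11 h31
    intro hF0
    have hm : ((LinearMap.id, 0, 0) :
        (X.V1 →ₗ[k] X.V1) × (X.V2 →ₗ[k] X.V2) × (X.V3 →ₗ[k] X.V3)) ∈ homSpace X X := by
      refine ⟨?_, ?_, ?_⟩
      · rw [hF0]; simp
      · have : X.r12 = 0 := map_to_subsingleton X.r12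
        rw [this]; simp
      · have : X.r23 = 0 := map_from_subsingleton X.r23
        rw [this]; simp
    obtain ⟨c, hc1, _, hc3⟩ := scalar_of_hom_one hhom hm
    have hV3 : Nontrivial X.V3 := Module.nontrivial_of_finrank_pos (R := k) (by omega)
    obtain ⟨z, hz⟩ := exists_ne (0 : X.V3)
    have hcz := LinearMap.congr_fun hc3 z
    simp only [LinearMap.zero_apply, LinearMap.smul_apply, LinearMap.id_coe, id_eq] at hcz
    have hc0 : c = 0 := by
      by_contra hne
      exact hz (smul_cancel hne hcz.symm)
    rw [hc0, zero_smul] at hc1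
    have hV1 : Nontrivial X.V1 := Module.nontrivial_of_finrank_pos (R := k) (by omega)
    obtain ⟨w, hw⟩ := exists_ne (0 : X.V1)
    have := LinearMap.congr_fun hc1 w
    simp only [LinearMap.zero_apply, LinearMap.id_coe, id_eq] at this
    exact hw this

end RepQ1
/-! ### Couples of preprojective / preinjective type are impossible -/

namespace QAux

variable {k : Type u} [Field k]
variable {A B C : Type u} [AddCommGroup A] [Module k A] [AddCommGroup B] [Module k B]
  [AddCommGroup C] [Module k C]

lemma comp_neg' (f : B →ₗ[k] C) (g : A →ₗ[k] B) : f ∘ₗ (-g) = -(f ∘ₗ g) := by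
  ext x; simp

lemma range_neg' (f : A →ₗ[k] B) : LinearMap.range (-f) = LinearMap.range f := by
  ext y
  constructor
  · rintro ⟨x, rfl⟩; exact ⟨-x, by simp⟩
  · rintro ⟨x, rfl⟩; exact ⟨-x, by simp⟩

lemma range_comp_surj (f : B →ₗ[k] C) (g : A →ₗ[k] B) (h : Function.Surjective g) :
    LinearMap.range (f ∘ₗ g) = LinearMap.range f := by
  rw [LinearMap.range_comp, LinearMap.range_eq_top.mpr h, Submodule.map_top]

end QAux

namespace RepQ1

open QAux

variable {k : Type u} [Field k] [IsAlgClosed k]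

section Couples

variable {X Y : RepQ1 k}

/-- the standard `C = -(T ∘ F ∘ A)` consequence of `R3` when `H` is invertible. -/
lemma extC_eq {A : Y.V3 →ₗ[k] X.V1} {C : Y.V3 →ₗ[k] X.V2}
    {T : X.V3 →ₗ[k] X.V2} (hTH : T ∘ₗ X.r23 = LinearMap.id)
    (R3 : X.r13 ∘ₗ A + X.r23 ∘ₗ C = 0) :
    C = -(T ∘ₗ (X.r13 ∘ₗ A)) := by
  have h : X.r23 ∘ₗ C = -(X.r13 ∘ₗ A) := by
    rw [add_comm] at R3
    rwa [add_eq_zero_iff_eq_neg] at R3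
  calc C = (T ∘ₗ X.r23) ∘ₗ C := by rw [hTH]; ext x; simp
    _ = T ∘ₗ (X.r23 ∘ₗ C) := by rw [LinearMap.comp_assoc]
    _ = T ∘ₗ (-(X.r13 ∘ₗ A)) := by rw [h]
    _ = -(T ∘ₗ (X.r13 ∘ₗ A)) := comp_neg' _ _

/-- Preprojective–preprojective extension forces a strict size drop (all four subcases). -/
lemma pp_drop (hX : PP2d X ∨ PP3d X) (hY : PP2d Y ∨ PP3d Y)
    (hne : ext1 X Y ≠ 0) : finrank k Y.V1 < finrank k X.V1 := by
  obtain ⟨A, B, C, ⟨R3, R2, R1⟩, hne0⟩ := (ext1_ne_zero_iff X Y).mp hne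
  have hBG' : B ∘ₗ Y.r12 = -(A ∘ₗ Y.r13) := by
    rw [add_comm] at R1
    rwa [add_eq_zero_iff_eq_neg] at R1
  rcases hX with ⟨T, hTH, hHT, hpX, hdX⟩ | ⟨S, hSG, hGS, hpX, hdX⟩
  · -- X of type PP2
    have hC := extC_eq hTH R3
    rcases hY with ⟨T', hTH', hHT', hpY, hdY⟩ | ⟨S', hSG', hGS', hpY, hdY⟩
    · -- (2,2) : pair (A ∘ H', B)
      have rel1 : (T ∘ₗ X.r13) ∘ₗ (A ∘ₗ Y.r23) + X.r12 ∘ₗ B = 0 := by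
        ext w
        have h2 := LinearMap.congr_fun R2 w
        have h3 := LinearMap.congr_fun hC (Y.r23 w)
        simp only [LinearMap.coe_comp, Function.comp_apply, LinearMap.neg_apply,
          LinearMap.add_apply, LinearMap.zero_apply] at h2 h3 ⊢
        rw [h2, h3]
        abel
      have rel2 : (A ∘ₗ Y.r23) ∘ₗ (T' ∘ₗ Y.r13) + B ∘ₗ Y.r12 = 0 := by
        ext w1
        have h1 := LinearMap.congr_fun R1 w1
        have hh := LinearMap.congr_fun hHT' (Y.r13 w1)
        simp only [LinearMap.coe_comp, Function.comp_apply, LinearMap.add_apply,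
          LinearMap.zero_apply, LinearMap.id_coe, id_eq] at h1 hh ⊢
        rw [hh]
        exact h1
      have hPQ : ¬(A ∘ₗ Y.r23 = 0 ∧ B = 0) := by
        rintro ⟨hP, hQ⟩
        apply hne0
        have hA : A = 0 := by
          ext z
          have hz := LinearMap.congr_fun hHT' z
          simp only [LinearMap.coe_comp, Function.comp_apply, LinearMap.id_coe, id_eq] at hz
          have := LinearMap.congr_fun hP (T' z)
          simp only [LinearMap.coe_comp, Function.comp_apply, LinearMap.zero_apply] at this
          rw [← hz]
          simpa using this
        refine ⟨hA, hQ, ?_⟩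
        rw [hC, hA]
        ext z; simp
      have := QAux.LA hpX hpY hdY (A ∘ₗ Y.r23) B hPQ rel1 rel2
      omega
    · -- (2,3) : single map A
      have rel : (T ∘ₗ X.r13) ∘ₗ (A ∘ₗ (Y.r23 ∘ₗ Y.r12)) = X.r12 ∘ₗ (A ∘ₗ Y.r13) := by
        ext w1
        have h2 := LinearMap.congr_fun R2 (Y.r12 w1)
        have h3 := LinearMap.congr_fun hC (Y.r23 (Y.r12 w1))
        have h1 := LinearMap.congr_fun hBG' w1
        simp only [LinearMap.coe_comp, Function.comp_apply, LinearMap.neg_apply,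
          LinearMap.add_apply, LinearMap.zero_apply] at h2 h3 h1 ⊢
        rw [← h2] at h3
        rw [h1] at h3
        rw [map_neg] at h3
        exact (neg_injective h3).symm
      have hA : A ≠ 0 := by
        intro hA0
        apply hne0
        refine ⟨hA0, ?_, ?_⟩
        · ext w
          have hw := LinearMap.congr_fun hGS' w
          simp only [LinearMap.coe_comp, Function.comp_apply, LinearMap.id_coe, id_eq] at hw
          have := LinearMap.congr_fun hBG' (S' w)
          simp only [LinearMap.coe_comp, Function.comp_apply, LinearMap.neg_apply, hA0,
            LinearMap.zero_apply, neg_zero] at this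
          rw [← hw]
          simpa using this
        · rw [hC, hA0]
          ext z; simp
      have := QAux.LB hpX hpY hdY A hA rel
      omega
  · -- X of type PP3
    have hHinj : Function.Injective X.r23 := by
      intro c1 c2 hcc
      have h1 := LinearMap.congr_fun hGS c1
      have h2 := LinearMap.congr_fun hGS c2
      simp only [LinearMap.coe_comp, Function.comp_apply, LinearMap.id_coe, id_eq] at h1 h2
      have : (X.r23 ∘ₗ X.r12) (S c1) = (X.r23 ∘ₗ X.r12) (S c2) := by
        simp only [LinearMap.coe_comp, Function.comp_apply, h1, h2]
        exact hcc
      have := hpX.b this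
      rw [← h1, ← h2, this]
    rcases hY with ⟨T', hTH', hHT', hpY, hdY⟩ | ⟨S', hSG', hGS', hpY, hdY⟩
    · -- (3,2) : pair (A ∘ H', B)
      have rel1 : X.r13 ∘ₗ (A ∘ₗ Y.r23) + (X.r23 ∘ₗ X.r12) ∘ₗ B = 0 := by
        ext w
        have h2 := LinearMap.congr_fun R2 w
        have h3 := LinearMap.congr_fun R3 (Y.r23 w)
        simp only [LinearMap.coe_comp, Function.comp_apply, LinearMap.add_apply,
          LinearMap.zero_apply] at h2 h3 ⊢
        rw [h2]
        exact h3
      have rel2 : (A ∘ₗ Y.r23) ∘ₗ (T' ∘ₗ Y.r13) + B ∘ₗ Y.r12 = 0 := by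
        ext w1
        have h1 := LinearMap.congr_fun R1 w1
        have hh := LinearMap.congr_fun hHT' (Y.r13 w1)
        simp only [LinearMap.coe_comp, Function.comp_apply, LinearMap.add_apply,
          LinearMap.zero_apply, LinearMap.id_coe, id_eq] at h1 hh ⊢
        rw [hh]
        exact h1
      have hPQ : ¬(A ∘ₗ Y.r23 = 0 ∧ B = 0) := by
        rintro ⟨hP, hQ⟩
        apply hne0
        have hA : A = 0 := by
          ext z
          have hz := LinearMap.congr_fun hHT' z
          simp only [LinearMap.coe_comp, Function.comp_apply, LinearMap.id_coe, id_eq] at hz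
          have := LinearMap.congr_fun hP (T' z)
          simp only [LinearMap.coe_comp, Function.comp_apply, LinearMap.zero_apply] at this
          rw [← hz]
          simpa using this
        refine ⟨hA, hQ, ?_⟩
        ext z
        have hz := LinearMap.congr_fun hHT' z
        simp only [LinearMap.coe_comp, Function.comp_apply, LinearMap.id_coe, id_eq] at hz
        have h2 := LinearMap.congr_fun R2 (T' z)
        simp only [LinearMap.coe_comp, Function.comp_apply, hQ, LinearMap.zero_apply,
          map_zero] at h2
        rw [LinearMap.zero_apply, ← hz, ← h2]
      have := QAux.LA hpX hpY hdY (A ∘ₗ Y.r23) B hPQ rel1 rel2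
      omega
    · -- (3,3) : single map A
      have rel : X.r13 ∘ₗ (A ∘ₗ (Y.r23 ∘ₗ Y.r12)) = (X.r23 ∘ₗ X.r12) ∘ₗ (A ∘ₗ Y.r13) := by
        ext w1
        have h1 := LinearMap.congr_fun hBG' w1
        have h2 := LinearMap.congr_fun R2 (Y.r12 w1)
        have h3 := LinearMap.congr_fun R3 (Y.r23 (Y.r12 w1))
        simp only [LinearMap.coe_comp, Function.comp_apply, LinearMap.neg_apply,
          LinearMap.add_apply, LinearMap.zero_apply] at h1 h2 h3 ⊢
        rw [h1, map_neg] at h2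
        rw [← h2, map_neg] at h3
        exact add_neg_eq_zero.mp h3
      have hA : A ≠ 0 := by
        intro hA0
        apply hne0
        have hB : B = 0 := by
          ext w
          have hw := LinearMap.congr_fun hGS' w
          simp only [LinearMap.coe_comp, Function.comp_apply, LinearMap.id_coe, id_eq] at hw
          have := LinearMap.congr_fun hBG' (S' w)
          simp only [LinearMap.coe_comp, Function.comp_apply, LinearMap.neg_apply, hA0,
            LinearMap.zero_apply, neg_zero] at this
          rw [← hw]
          simpa using this
        refine ⟨hA0, hB, ?_⟩
        ext z
        apply hHinj
        have h3 := LinearMap.congr_fun R3 z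
        simp only [LinearMap.coe_comp, Function.comp_apply, LinearMap.add_apply, hA0,
          LinearMap.zero_apply, map_zero, zero_add] at h3
        simpa using h3
      have := QAux.LB hpX hpY hdY A hA rel
      omega

end Couples

end RepQ1
namespace RepQ1

open QAux

variable {k : Type u} [Field k] [IsAlgClosed k]

section Couples2

variable {X Y : RepQ1 k}

/-- Preinjective–preinjective extension forces a strict size increase (all four subcases). -/
lemma pi_drop (hX : PI1d X ∨ PI4d X) (hY : PI1d Y ∨ PI4d Y)
    (hne : ext1 X Y ≠ 0) : finrank k X.V1 < finrank k Y.V1 := by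
  obtain ⟨A, B, C, ⟨R3, R2, R1⟩, hne0⟩ := (ext1_ne_zero_iff X Y).mp hne
  have hBG' : B ∘ₗ Y.r12 = -(A ∘ₗ Y.r13) := by
    rw [add_comm] at R1
    rwa [add_eq_zero_iff_eq_neg] at R1
  rcases hX with ⟨T, hTH, hHT, hpX, hdX⟩ | ⟨S, hSG, hGS, hpX, hdX⟩
  · -- X of type PI1
    have hC := extC_eq hTH R3
    rcases hY with ⟨T', hTH', hHT', hpY, hdY⟩ | ⟨S', hSG', hGS', hpY, hdY⟩
    · -- (1,1) : pair (A ∘ H', B)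
      have rel1 : (T ∘ₗ X.r13) ∘ₗ (A ∘ₗ Y.r23) + X.r12 ∘ₗ B = 0 := by
        ext w
        have h2 := LinearMap.congr_fun R2 w
        have h3 := LinearMap.congr_fun hC (Y.r23 w)
        simp only [LinearMap.coe_comp, Function.comp_apply, LinearMap.neg_apply,
          LinearMap.add_apply, LinearMap.zero_apply] at h2 h3 ⊢
        rw [h2, h3]
        abel
      have rel2 : (A ∘ₗ Y.r23) ∘ₗ (T' ∘ₗ Y.r13) + B ∘ₗ Y.r12 = 0 := by
        ext w1
        have h1 := LinearMap.congr_fun R1 w1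
        have hh := LinearMap.congr_fun hHT' (Y.r13 w1)
        simp only [LinearMap.coe_comp, Function.comp_apply, LinearMap.add_apply,
          LinearMap.zero_apply, LinearMap.id_coe, id_eq] at h1 hh ⊢
        rw [hh]
        exact h1
      have hPQ : ¬(A ∘ₗ Y.r23 = 0 ∧ B = 0) := by
        rintro ⟨hP, hQ⟩
        apply hne0
        have hA : A = 0 := by
          ext z
          have hz := LinearMap.congr_fun hHT' z
          simp only [LinearMap.coe_comp, Function.comp_apply, LinearMap.id_coe, id_eq] at hz
          have := LinearMap.congr_fun hP (T' z)
          simp only [LinearMap.coe_comp, Function.comp_apply, LinearMap.zero_apply] at this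
          rw [← hz]
          simpa using this
        refine ⟨hA, hQ, ?_⟩
        rw [hC, hA]
        ext z; simp
      have h := QAux.LA' hpX hpY hdX (A ∘ₗ Y.r23) B hPQ rel1 rel2
      omega
    · -- (1,4) : single map A
      have rel : (T ∘ₗ X.r13) ∘ₗ (A ∘ₗ (Y.r23 ∘ₗ Y.r12)) = X.r12 ∘ₗ (A ∘ₗ Y.r13) := by
        ext w1
        have h2 := LinearMap.congr_fun R2 (Y.r12 w1)
        have h3 := LinearMap.congr_fun hC (Y.r23 (Y.r12 w1))
        have h1 := LinearMap.congr_fun hBG' w1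
        simp only [LinearMap.coe_comp, Function.comp_apply, LinearMap.neg_apply,
          LinearMap.add_apply, LinearMap.zero_apply] at h2 h3 h1 ⊢
        rw [← h2] at h3
        rw [h1] at h3
        rw [map_neg] at h3
        exact (neg_injective h3).symm
      have hA : A ≠ 0 := by
        intro hA0
        apply hne0
        refine ⟨hA0, ?_, ?_⟩
        · ext w
          have hw := LinearMap.congr_fun hGS' w
          simp only [LinearMap.coe_comp, Function.comp_apply, LinearMap.id_coe, id_eq] at hw
          have := LinearMap.congr_fun hBG' (S' w)
          simp only [LinearMap.coe_comp, Function.comp_apply, LinearMap.neg_apply, hA0,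
            LinearMap.zero_apply, neg_zero] at this
          rw [← hw]
          simpa using this
        · rw [hC, hA0]
          ext z; simp
      have h := QAux.LB' hpX hpY hdX A hA rel
      omega
  · -- X of type PI4
    rcases hY with ⟨T', hTH', hHT', hpY, hdY⟩ | ⟨S', hSG', hGS', hpY, hdY⟩
    · -- (4,1) : pair (A ∘ H', B)
      have rel1 : X.r13 ∘ₗ (A ∘ₗ Y.r23) + (X.r23 ∘ₗ X.r12) ∘ₗ B = 0 := by
        ext w
        have h2 := LinearMap.congr_fun R2 w
        have h3 := LinearMap.congr_fun R3 (Y.r23 w)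
        simp only [LinearMap.coe_comp, Function.comp_apply, LinearMap.add_apply,
          LinearMap.zero_apply] at h2 h3 ⊢
        rw [h2]
        exact h3
      have rel2 : (A ∘ₗ Y.r23) ∘ₗ (T' ∘ₗ Y.r13) + B ∘ₗ Y.r12 = 0 := by
        ext w1
        have h1 := LinearMap.congr_fun R1 w1
        have hh := LinearMap.congr_fun hHT' (Y.r13 w1)
        simp only [LinearMap.coe_comp, Function.comp_apply, LinearMap.add_apply,
          LinearMap.zero_apply, LinearMap.id_coe, id_eq] at h1 hh ⊢
        rw [hh]
        exact h1
      have hPQ : ¬(A ∘ₗ Y.r23 = 0 ∧ B = 0) := by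
        rintro ⟨hP, hQ⟩
        apply hne0
        have hA : A = 0 := by
          ext z
          have hz := LinearMap.congr_fun hHT' z
          simp only [LinearMap.coe_comp, Function.comp_apply, LinearMap.id_coe, id_eq] at hz
          have := LinearMap.congr_fun hP (T' z)
          simp only [LinearMap.coe_comp, Function.comp_apply, LinearMap.zero_apply] at this
          rw [← hz]
          simpa using this
        refine ⟨hA, hQ, ?_⟩
        ext z
        have hz := LinearMap.congr_fun hHT' z
        simp only [LinearMap.coe_comp, Function.comp_apply, LinearMap.id_coe, id_eq] at hz
        have h2 := LinearMap.congr_fun R2 (T' z)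
        simp only [LinearMap.coe_comp, Function.comp_apply, hQ, LinearMap.zero_apply,
          map_zero] at h2
        rw [LinearMap.zero_apply, ← hz, ← h2]
      have h := QAux.LA' hpX hpY hdX (A ∘ₗ Y.r23) B hPQ rel1 rel2
      omega
    · -- (4,4) : single map A
      have hH'surj : Function.Surjective Y.r23 := by
        have hs : Function.Surjective (Y.r23 ∘ₗ Y.r12) := hpY.b
        rw [LinearMap.coe_comp] at hs
        exact hs.of_comp
      have rel : X.r13 ∘ₗ (A ∘ₗ (Y.r23 ∘ₗ Y.r12)) = (X.r23 ∘ₗ X.r12) ∘ₗ (A ∘ₗ Y.r13) := by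
        ext w1
        have h1 := LinearMap.congr_fun hBG' w1
        have h2 := LinearMap.congr_fun R2 (Y.r12 w1)
        have h3 := LinearMap.congr_fun R3 (Y.r23 (Y.r12 w1))
        simp only [LinearMap.coe_comp, Function.comp_apply, LinearMap.neg_apply,
          LinearMap.add_apply, LinearMap.zero_apply] at h1 h2 h3 ⊢
        rw [h1, map_neg] at h2
        rw [← h2, map_neg] at h3
        exact add_neg_eq_zero.mp h3
      have hA : A ≠ 0 := by
        intro hA0
        apply hne0
        have hB : B = 0 := by
          ext w
          have hw := LinearMap.congr_fun hGS' w
          simp only [LinearMap.coe_comp, Function.comp_apply, LinearMap.id_coe, id_eq] at hw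
          have := LinearMap.congr_fun hBG' (S' w)
          simp only [LinearMap.coe_comp, Function.comp_apply, LinearMap.neg_apply, hA0,
            LinearMap.zero_apply, neg_zero] at this
          rw [← hw]
          simpa using this
        refine ⟨hA0, hB, ?_⟩
        ext z
        obtain ⟨w, rfl⟩ := hH'surj z
        have h2 := LinearMap.congr_fun R2 w
        simp only [LinearMap.coe_comp, Function.comp_apply, hB, LinearMap.zero_apply,
          map_zero] at h2
        rw [LinearMap.zero_apply, ← h2]
      have h := QAux.LB' hpX hpY hdX A hA rel
      omega

end Couples2

end RepQ1
namespace RepQ1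

open QAux

variable {k : Type u} [Field k] [IsAlgClosed k]

section Couples3

variable {X Y : RepQ1 k}

/-- There are no extensions of a preprojective type by a preinjective type. -/
lemma pp_pi (hX : PP2d X ∨ PP3d X) (hY : PI1d Y ∨ PI4d Y)
    (hne : ext1 X Y ≠ 0) : False := by
  obtain ⟨A, B, C, ⟨R3, R2, R1⟩, hne0⟩ := (ext1_ne_zero_iff X Y).mp hne
  have hBG' : B ∘ₗ Y.r12 = -(A ∘ₗ Y.r13) := by
    rw [add_comm] at R1
    rwa [add_eq_zero_iff_eq_neg] at R1
  have hHC : X.r23 ∘ₗ C = -(X.r13 ∘ₗ A) := by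
    rw [add_comm] at R3
    rwa [add_eq_zero_iff_eq_neg] at R3
  -- Y-side surjectivity facts
  have hsurjs : Function.Surjective Y.r13 ∧ Function.Surjective Y.r12 ∧
      Function.Surjective Y.r23 := by
    rcases hY with ⟨T', hTH', hHT', hpY, hdY⟩ | ⟨S', hSG', hGS', hpY, hdY⟩
    · have hH' : Function.Surjective Y.r23 := fun z => ⟨T' z, by
        have := LinearMap.congr_fun hHT' z
        simpa using this⟩
      have hα' : Function.Surjective (T' ∘ₗ Y.r13) := hpY.a
      have hF' : Function.Surjective Y.r13 := by
        intro z
        obtain ⟨y, rfl⟩ := hH' z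
        obtain ⟨w1, hw1⟩ := hα' y
        refine ⟨w1, ?_⟩
        simp only [LinearMap.coe_comp, Function.comp_apply] at hw1
        have hp := LinearMap.congr_fun hHT' (Y.r13 w1)
        simp only [LinearMap.coe_comp, Function.comp_apply, LinearMap.id_coe, id_eq] at hp
        rw [← hw1]
        exact hp.symm
      exact ⟨hF', hpY.b, hH'⟩
    · have hF' : Function.Surjective Y.r13 := hpY.a
      have hH'G' : Function.Surjective (Y.r23 ∘ₗ Y.r12) := hpY.b
      have hH' : Function.Surjective Y.r23 := by
        rw [LinearMap.coe_comp] at hH'G'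
        exact hH'G'.of_comp
      have hG' : Function.Surjective Y.r12 := (bij_of_inverses hSG' hGS').2
      exact ⟨hF', hG', hH'⟩
  obtain ⟨hF', hG', hH'⟩ := hsurjs
  -- the key range identities
  have rngB : LinearMap.range B = LinearMap.range A := by
    rw [← range_comp_surj B Y.r12 hG', hBG', range_neg', range_comp_surj A Y.r13 hF']
  have rngC : LinearMap.range C = Submodule.map X.r12 (LinearMap.range A) := by
    rw [← range_comp_surj C Y.r23 hH', ← R2, LinearMap.range_comp, rngB]
  have rngHC : Submodule.map X.r13 (LinearMap.range A) =
      Submodule.map X.r23 (Submodule.map X.r12 (LinearMap.range A)) := by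
    rw [← rngC, ← LinearMap.range_comp, ← LinearMap.range_comp, hHC, range_neg']
  -- now split on the type of X
  have hZbot : LinearMap.range A = ⊥ := by
    by_contra hZ
    rcases hX with ⟨T, hTH, hHT, hpX, hdX⟩ | ⟨S, hSG, hGS, hpX, hdX⟩
    · -- pencil (T ∘ F, G)
      apply QAux.no_invariant hpX (LinearMap.range A) hZ
      have hmap : Submodule.map (T ∘ₗ X.r13) (LinearMap.range A) =
          Submodule.map X.r12 (LinearMap.range A) := by
        rw [Submodule.map_comp, rngHC, ← Submodule.map_comp, hTH, Submodule.map_id]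
      exact hmap
    · -- pencil (F, H ∘ G)
      apply QAux.no_invariant hpX (LinearMap.range A) hZ
      rw [rngHC, ← Submodule.map_comp]
  have hA : A = 0 := LinearMap.range_eq_bot.mp hZbot
  have hC : C = 0 := by
    have : LinearMap.range C = ⊥ := by
      rw [rngC, hZbot]
      exact Submodule.map_bot _
    exact LinearMap.range_eq_bot.mp this
  have hB : B = 0 := by
    have : LinearMap.range B = ⊥ := by rw [rngB, hZbot]
    exact LinearMap.range_eq_bot.mp this
  exact hne0 ⟨hA, hB, hC⟩

end Couples3

end RepQ1
namespace RepQ1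

open QAux

variable {k : Type u} [Field k]

section MMprime

/-- Full `M`-type classification. -/
lemma Mfull {X : RepQ1 k} (hE : IsExceptional X)
    (hGns : ¬ Function.Surjective X.r12) (hHk : LinearMap.ker X.r23 ≠ ⊥) : MT X := by
  obtain ⟨s1, s3⟩ := Mtype_of X hE.1 hGns hHk
  have h1 : finrank k X.V1 = 0 := finrank_zero_iff.mpr s1
  have h3 : finrank k X.V3 = 0 := finrank_zero_iff.mpr s3
  have he := euler X X
  rw [hE.1, hE.2, h1, h3] at he
  have h2' : finrank k X.V2 * finrank k X.V2 = 1 := by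
    simpa using he.symm
  have hle : finrank k X.V2 ≤ 1 := by nlinarith [h2']
  have : finrank k X.V2 = 0 ∨ finrank k X.V2 = 1 := by omega
  rcases this with h | h
  · rw [h] at h2'
    simp at h2'
  · exact ⟨s1, h, s3⟩

/-- Full `M'`-type classification. -/
lemma M'full {X : RepQ1 k} (hE : IsExceptional X)
    (hGk : LinearMap.ker X.r12 ≠ ⊥) (hHns : LinearMap.range X.r23 ≠ ⊤) : M'T X := by
  have hs2 := M'type_of X hE.1 hGk hHns
  have h2 : finrank k X.V2 = 0 := finrank_zero_iff.mpr hs2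
  have hV1 : Nontrivial X.V1 := by
    obtain ⟨v, hv, hv0⟩ := Submodule.exists_mem_ne_zero_of_ne_bot hGk
    exact nontrivial_of_ne v 0 hv0
  have hV3 : Nontrivial X.V3 := by
    rw [← not_subsingleton_iff_nontrivial]
    intro hs
    exact hHns (range_eq_top_of_subsingleton X.r23)
  have h1p : 0 < finrank k X.V1 := finrank_pos
  have h3p : 0 < finrank k X.V3 := finrank_pos
  have he := euler X X
  rw [hE.1, hE.2, h2] at he
  set a := finrank k X.V1 with ha
  set b := finrank k X.V3 with hb
  have he' : 1 + a * b = a * a + b * b := by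
    simpa using he
  have hab1 : (a : ℤ) * b ≤ 1 := by nlinarith [sq_nonneg ((a : ℤ) - (b : ℤ)),
    (by exact_mod_cast he' : (1 : ℤ) + a * b = a * a + b * b)]
  have hab1' : a * b ≤ 1 := by exact_mod_cast hab1
  have hab2 : 1 ≤ a * b := Nat.one_le_iff_ne_zero.mpr (by positivity)
  have hab : a * b = 1 := le_antisymm hab1' hab2
  have ha1 : a ≤ a * b := Nat.le_mul_of_pos_right a (by omega)
  have hb1 : b ≤ a * b := Nat.le_mul_of_pos_left b (by omega)
  have h11 : a = 1 := by omega
  have h31 : b = 1 := by omega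
  refine ⟨h11, hs2, h31, ?_⟩
  apply bij_of_ne_zero_rank_one X.r13 h11 h31
  intro hF0
  have hm : ((LinearMap.id, 0, 0) :
      (X.V1 →ₗ[k] X.V1) × (X.V2 →ₗ[k] X.V2) × (X.V3 →ₗ[k] X.V3)) ∈ homSpace X X := by
    refine ⟨?_, ?_, ?_⟩
    · rw [hF0]; simp
    · have : X.r12 = 0 := map_to_subsingleton X.r12
      rw [this]; simp
    · have : X.r23 = 0 := map_from_subsingleton X.r23
      rw [this]; simp
  obtain ⟨c, hc1, _, hc3⟩ := scalar_of_hom_one hE.1 hm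
  obtain ⟨z, hz⟩ := exists_ne (0 : X.V3)
  have hcz := LinearMap.congr_fun hc3 z
  simp only [LinearMap.zero_apply, LinearMap.smul_apply, LinearMap.id_coe, id_eq] at hcz
  have hc0 : c = 0 := by
    by_contra hne
    exact hz (smul_cancel hne hcz.symm)
  rw [hc0, zero_smul] at hc1
  obtain ⟨w, hw⟩ := exists_ne (0 : X.V1)
  have := LinearMap.congr_fun hc1 w
  simp only [LinearMap.zero_apply, LinearMap.id_coe, id_eq] at this
  exact hw this

/-- If the partner has trivial outer spaces then injectivity of `r12` kills `ext1 X Z`. -/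
lemma extM_out {X Z : RepQ1 k} (hs1 : Subsingleton Z.V1) (hs3 : Subsingleton Z.V3)
    (hi : Function.Injective X.r12) : ext1 X Z = 0 := by
  haveI := hs1; haveI := hs3
  rw [ext1_eq_zero_iff_surj]
  rw [LinearMap.range_eq_top]
  intro θ
  obtain ⟨r, hr⟩ := X.r12.exists_leftInverse_of_injective (LinearMap.ker_eq_bot.mpr hi)
  refine ⟨(0, θ.2.1 ∘ₗ r, 0), ?_⟩
  rw [phi_apply]
  refine Prod.ext ?_ (Prod.ext ?_ ?_)
  · exact LinearMap.ext fun x => Subsingleton.elim _ _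
  · show (θ.2.1 ∘ₗ r) ∘ₗ X.r12 - Z.r12 ∘ₗ 0 = θ.2.1
    rw [LinearMap.comp_zero, sub_zero, LinearMap.comp_assoc, hr, LinearMap.comp_id]
  · exact LinearMap.ext fun x => Subsingleton.elim _ _

/-- If the partner has trivial outer spaces then surjectivity of `r23` kills `ext1 Z X`. -/
lemma extM_in {X Z : RepQ1 k} (hs1 : Subsingleton Z.V1) (hs3 : Subsingleton Z.V3)
    (hs : Function.Surjective X.r23) : ext1 Z X = 0 := by
  haveI := hs1; haveI := hs3
  rw [ext1_eq_zero_iff_surj]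
  rw [LinearMap.range_eq_top]
  intro θ
  obtain ⟨s, hs'⟩ := X.r23.exists_rightInverse_of_surjective (LinearMap.range_eq_top.mpr hs)
  refine ⟨(0, -(s ∘ₗ θ.2.2), 0), ?_⟩
  rw [phi_apply]
  refine Prod.ext ?_ (Prod.ext ?_ ?_)
  · exact map_from_subsingleton _ |>.trans (map_from_subsingleton _).symm
  · exact map_from_subsingleton _ |>.trans (map_from_subsingleton _).symm
  · show 0 ∘ₗ Z.r23 - X.r23 ∘ₗ (-(s ∘ₗ θ.2.2)) = θ.2.2
    rw [LinearMap.zero_comp, zero_sub, comp_neg', neg_neg, ← LinearMap.comp_assoc, hs',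
      LinearMap.id_comp]

/-- If the partner is of `M'`-type then injectivity of `r23` kills `ext1 X Z`. -/
lemma extM'_out {X Z : RepQ1 k} (hs2 : Subsingleton Z.V2) (hb : Function.Bijective Z.r13)
    (hi : Function.Injective X.r23) : ext1 X Z = 0 := by
  haveI := hs2
  rw [ext1_eq_zero_iff_surj, LinearMap.range_eq_top]
  intro θ
  obtain ⟨r, hr⟩ := X.r23.exists_leftInverse_of_injective (LinearMap.ker_eq_bot.mpr hi)
  set e := LinearEquiv.ofBijective Z.r13 hb with he
  set g3 : X.V3 →ₗ[k] Z.V3 := θ.2.2 ∘ₗ r with hg3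
  set g1 : X.V1 →ₗ[k] Z.V1 := e.symm.toLinearMap ∘ₗ (g3 ∘ₗ X.r13 - θ.1) with hg1
  refine ⟨(g1, 0, g3), ?_⟩
  rw [phi_apply]
  refine Prod.ext ?_ (Prod.ext ?_ ?_)
  · show g3 ∘ₗ X.r13 - Z.r13 ∘ₗ g1 = θ.1
    ext x
    simp only [LinearMap.sub_apply, LinearMap.coe_comp, Function.comp_apply, hg1,
      LinearEquiv.coe_coe]
    have h0 : Z.r13 (e.symm (g3 (X.r13 x) - θ.1 x)) = g3 (X.r13 x) - θ.1 x :=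
      e.apply_symm_apply _
    rw [h0]
    abel
  · exact LinearMap.ext fun x => Subsingleton.elim _ _
  · show g3 ∘ₗ X.r23 - Z.r23 ∘ₗ 0 = θ.2.2
    rw [LinearMap.comp_zero, sub_zero, hg3, LinearMap.comp_assoc, hr, LinearMap.comp_id]

/-- If the partner is of `M'`-type then surjectivity of `r12` kills `ext1 Z X`. -/
lemma extM'_in {X Z : RepQ1 k} (hs2 : Subsingleton Z.V2) (hb : Function.Bijective Z.r13)
    (hs : Function.Surjective X.r12) : ext1 Z X = 0 := by
  haveI := hs2
  rw [ext1_eq_zero_iff_surj, LinearMap.range_eq_top]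
  intro θ
  obtain ⟨s, hs'⟩ := X.r12.exists_rightInverse_of_surjective (LinearMap.range_eq_top.mpr hs)
  set e := LinearEquiv.ofBijective Z.r13 hb with he
  set g1 : Z.V1 →ₗ[k] X.V1 := -(s ∘ₗ θ.2.1) with hg1
  set g3 : Z.V3 →ₗ[k] X.V3 := (θ.1 + X.r13 ∘ₗ g1) ∘ₗ e.symm.toLinearMap with hg3
  refine ⟨(g1, 0, g3), ?_⟩
  rw [phi_apply]
  refine Prod.ext ?_ (Prod.ext ?_ ?_)
  · show g3 ∘ₗ Z.r13 - X.r13 ∘ₗ g1 = θ.1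
    ext x
    simp only [LinearMap.sub_apply, LinearMap.coe_comp, Function.comp_apply, hg3,
      LinearEquiv.coe_coe]
    have hsymm : e.symm (Z.r13 x) = x := e.symm_apply_apply x
    rw [hsymm]
    simp
  · show 0 ∘ₗ Z.r12 - X.r12 ∘ₗ g1 = θ.2.1
    rw [LinearMap.zero_comp, zero_sub, hg1, comp_neg', neg_neg, ← LinearMap.comp_assoc, hs',
      LinearMap.id_comp]
  · exact map_from_subsingleton _ |>.trans (map_from_subsingleton _).symm

end MMprime

end RepQ1
namespace RepQ1

open QAux

variable {k : Type u} [Field k]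

lemma couple_M {X Y : RepQ1 k} (hMT : MT X) (hYE : IsExceptional Y)
    (h1 : ext1 X Y ≠ 0) (h2 : ext1 Y X ≠ 0) : M'T Y := by
  obtain ⟨s1, _, s3⟩ := hMT
  have hk : LinearMap.ker Y.r12 ≠ ⊥ := by
    intro hkb
    exact h2 (extM_out s1 s3 (LinearMap.ker_eq_bot.mp hkb))
  have hr : LinearMap.range Y.r23 ≠ ⊤ := by
    intro hrt
    exact h1 (extM_in s1 s3 (LinearMap.range_eq_top.mp hrt))
  exact M'full hYE hk hr

lemma couple_M' {X Y : RepQ1 k} (hM' : M'T X) (hYE : IsExceptional Y)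
    (h1 : ext1 X Y ≠ 0) (h2 : ext1 Y X ≠ 0) : MT Y := by
  obtain ⟨_, s2, _, hbij⟩ := hM'
  have hk : LinearMap.ker Y.r23 ≠ ⊥ := by
    intro hkb
    exact h2 (extM'_out s2 hbij (LinearMap.ker_eq_bot.mp hkb))
  have hgs : ¬ Function.Surjective Y.r12 := by
    intro hsj
    exact h1 (extM'_in s2 hbij hsj)
  exact Mfull hYE hgs hk

lemma iso_Mrep {X : RepQ1 k} (h : MT X) : Iso X (Mrep k) := by
  obtain ⟨s1, h2, s3⟩ := h
  haveI := s1
  haveI := s3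
  haveI : Subsingleton ((Mrep k).V1) := by
    show Subsingleton (Fin 0 → k)
    infer_instance
  haveI : Subsingleton ((Mrep k).V3) := by
    show Subsingleton (Fin 0 → k)
    infer_instance
  have hf1 : finrank k X.V1 = finrank k ((Mrep k).V1) := by
    show _ = finrank k (Fin 0 → k)
    rw [Module.finrank_fin_fun, finrank_zero_iff.mpr s1]
  have hf2 : finrank k X.V2 = finrank k ((Mrep k).V2) := by
    show _ = finrank k (Fin 1 → k)
    rw [Module.finrank_fin_fun, h2]
  have hf3 : finrank k X.V3 = finrank k ((Mrep k).V3) := by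
    show _ = finrank k (Fin 0 → k)
    rw [Module.finrank_fin_fun, finrank_zero_iff.mpr s3]
  refine ⟨LinearEquiv.ofFinrankEq _ _ hf1, LinearEquiv.ofFinrankEq _ _ hf2,
    LinearEquiv.ofFinrankEq _ _ hf3, ?_, ?_, ?_⟩
  · exact LinearMap.ext fun x => Subsingleton.elim _ _
  · exact LinearMap.ext fun x => by rw [Subsingleton.elim x 0]; simp
  · exact LinearMap.ext fun x => Subsingleton.elim _ _

lemma iso_Mprep {X : RepQ1 k} (h : M'T X) : Iso X (Mprep k) := by
  obtain ⟨h1, s2, h3, hbij⟩ := h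
  haveI := s2
  haveI : Subsingleton ((Mprep k).V2) := by
    show Subsingleton (Fin 0 → k)
    infer_instance
  have hf1 : finrank k X.V1 = finrank k ((Mprep k).V1) := by
    show _ = finrank k (Fin 1 → k)
    rw [Module.finrank_fin_fun, h1]
  have hf2 : finrank k X.V2 = finrank k ((Mprep k).V2) := by
    show _ = finrank k (Fin 0 → k)
    rw [Module.finrank_fin_fun, finrank_zero_iff.mpr s2]
  set e1 : X.V1 ≃ₗ[k] ((Mprep k).V1) := LinearEquiv.ofFinrankEq _ _ hf1 with he1
  set eF : X.V1 ≃ₗ[k] X.V3 := LinearEquiv.ofBijective X.r13 hbij with heF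
  refine ⟨e1, LinearEquiv.ofFinrankEq _ _ hf2, eF.symm.trans e1, ?_, ?_, ?_⟩
  · ext x
    show e1 (eF.symm (X.r13 x)) = (Mprep k).r13 (e1 x)
    have hs : eF.symm (X.r13 x) = x := eF.symm_apply_apply x
    rw [hs]
    rfl
  · exact LinearMap.ext fun x => Subsingleton.elim _ _
  · exact LinearMap.ext fun x => by rw [Subsingleton.elim x 0]; simp

end RepQ1
/-- `{M, M'}` is the unique Ext-nontrivial couple of exceptional representations of `Q1`. -/
theorem statement_8 (k : Type u) [Field k] [IsAlgClosed k] (X Y : RepQ1 k)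
    (hX : X.IsExceptional) (hY : Y.IsExceptional)
    (h1 : RepQ1.ext1 X Y ≠ 0) (h2 : RepQ1.ext1 Y X ≠ 0) :
    (RepQ1.Iso X (Mrep k) ∧ RepQ1.Iso Y (Mprep k)) ∨
    (RepQ1.Iso X (Mprep k) ∧ RepQ1.Iso Y (Mrep k)) := by
  have htx : RepQ1.MT X ∨ RepQ1.M'T X ∨
      ((RepQ1.PP2d X ∨ RepQ1.PP3d X) ∨ (RepQ1.PI1d X ∨ RepQ1.PI4d X)) := by
    have := RepQ1.trichotomy hX
    tauto
  have hty : RepQ1.MT Y ∨ RepQ1.M'T Y ∨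
      ((RepQ1.PP2d Y ∨ RepQ1.PP3d Y) ∨ (RepQ1.PI1d Y ∨ RepQ1.PI4d Y)) := by
    have := RepQ1.trichotomy hY
    tauto
  rcases htx with hxM | hxM' | hxP
  · exact Or.inl ⟨RepQ1.iso_Mrep hxM, RepQ1.iso_Mprep (RepQ1.couple_M hxM hY h1 h2)⟩
  · exact Or.inr ⟨RepQ1.iso_Mprep hxM', RepQ1.iso_Mrep (RepQ1.couple_M' hxM' hY h1 h2)⟩
  · rcases hty with hyM | hyM' | hyP
    · exact Or.inr ⟨RepQ1.iso_Mprep (RepQ1.couple_M hyM hX h2 h1), RepQ1.iso_Mrep hyM⟩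
    · exact Or.inl ⟨RepQ1.iso_Mrep (RepQ1.couple_M' hyM' hX h2 h1), RepQ1.iso_Mprep hyM'⟩
    · exfalso
      rcases hxP with hxPP | hxPI <;> rcases hyP with hyPP | hyPI
      · have d1 := RepQ1.pp_drop hxPP hyPP h1
        have d2 := RepQ1.pp_drop hyPP hxPP h2
        omega
      · exact RepQ1.pp_pi hxPP hyPI h1
      · exact RepQ1.pp_pi hyPP hxPI h2
      · have d1 := RepQ1.pi_drop hxPI hyPI h1
        have d2 := RepQ1.pi_drop hyPI hxPI h2
        omega
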